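/- arXiv:1511.01035 — 9 statements merged into one kernel-verified Lean document; each statement's English description precedes it below -/
import Mathlib

section
/- For any finite simple graph G on n vertices, ∑_{(k₁,k₂) ∈ A(G)} (k₁+k₂)/(k₁·k₂) ≤ ∑_{(k₁,k₂) ∈ A(G)} ((k₁+k₂)/(k₁·k₂)) · j_{k₁k₂}(G) ≤ n. -/
noncomputable def gdeg {n : ℕ} (G : SimpleGraph (Fin n)) (v : Fin n) : ℕ :=
  letI := Classical.decRel G.Adj
  G.degree v

noncomputable def jdv {n : ℕ} (G : SimpleGraph (Fin n)) (i k : ℕ) : ℕ :=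
  Set.ncard {e ∈ G.edgeSet | Sym2.map (gdeg G) e = s(i, k)}

noncomputable def jdvSupport {n : ℕ} (G : SimpleGraph (Fin n)) : Finset (ℕ × ℕ) :=
  (Finset.Icc 1 (n - 1) ×ˢ Finset.Icc 1 (n - 1)).filter
    (fun p => p.1 ≤ p.2 ∧ 0 < jdv G p.1 p.2)

noncomputable def degCount {n : ℕ} (G : SimpleGraph (Fin n)) (i : ℕ) : ℕ :=
  Set.ncard {v : Fin n | gdeg G v = i}

theorem stmt2 (n : ℕ) (G : SimpleGraph (Fin n)) :
    (∑ p ∈ jdvSupport G, ((p.1 : ℝ) + (p.2 : ℝ)) / ((p.1 : ℝ) * (p.2 : ℝ)) ≤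
      ∑ p ∈ jdvSupport G,
        ((p.1 : ℝ) + (p.2 : ℝ)) / ((p.1 : ℝ) * (p.2 : ℝ)) * (jdv G p.1 p.2 : ℝ)) ∧
    (∑ p ∈ jdvSupport G,
        ((p.1 : ℝ) + (p.2 : ℝ)) / ((p.1 : ℝ) * (p.2 : ℝ)) * (jdv G p.1 p.2 : ℝ) ≤ (n : ℝ)) := by
  classical
  letI : DecidableRel G.Adj := Classical.decRel G.Adj
  set d : Fin n → ℕ := gdeg G with hd
  have hdeg : ∀ v, d v = G.degree v := fun v => rfl
  set g : ℕ × ℕ → ℝ := fun p => ((p.1 : ℝ) + (p.2 : ℝ)) / ((p.1 : ℝ) * (p.2 : ℝ)) with hg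
  have hg0 : ∀ p : ℕ × ℕ, 0 ≤ g p := by
    intro p; apply div_nonneg <;> positivity
  constructor
  · apply Finset.sum_le_sum
    intro p hp
    have hpj : 0 < jdv G p.1 p.2 := ((Finset.mem_filter.1 hp).2).2
    have : (1 : ℝ) ≤ (jdv G p.1 p.2 : ℝ) := by exact_mod_cast hpj
    calc ((p.1 : ℝ) + (p.2 : ℝ)) / ((p.1 : ℝ) * (p.2 : ℝ))
        = g p := rfl
      _ ≤ g p * (jdv G p.1 p.2 : ℝ) := le_mul_of_one_le_right (hg0 p) this
  · set E : Finset (Sym2 (Fin n)) := G.edgeFinset with hE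
    set φ : Sym2 (Fin n) → ℕ × ℕ := Sym2.lift ⟨fun a b => (min (d a) (d b), max (d a) (d b)),
      fun a b => by simp [min_comm, max_comm]⟩ with hφ
    have hd1 : ∀ ⦃a b : Fin n⦄, G.Adj a b → 1 ≤ d a := by
      intro a b h
      rw [hdeg]
      exact (G.degree_pos_iff_exists_adj a).2 ⟨b, h⟩
    have hdn : ∀ v, d v ≤ n - 1 := by
      intro v
      have h1 := G.degree_lt_card_verts v
      rw [Fintype.card_fin] at h1
      rw [hdeg]; omega
    -- jdv as a finset card
    have hjdv : ∀ i k : ℕ, jdv G i k = (E.filter (fun e => Sym2.map d e = s(i, k))).card := by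
      intro i k
      rw [jdv, ← Set.ncard_coe_finset]
      congr 1
      ext e
      simp [hE, SimpleGraph.mem_edgeFinset, hd]
    have hpair : ∀ (i k : ℕ), i ≤ k → ∀ e : Sym2 (Fin n),
        (Sym2.map d e = s(i, k) ↔ φ e = (i, k)) := by
      intro i k hik e
      induction e using Sym2.ind with
      | _ a b =>
        simp only [Sym2.map_pair_eq, Sym2.eq_iff, hφ, Sym2.lift_mk, Prod.ext_iff]
        omega
    have hφE : ∀ e ∈ E, φ e ∈ jdvSupport G := by
      intro e he
      induction e using Sym2.ind with
      | _ a b =>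
        have hab : G.Adj a b := by rwa [hE, SimpleGraph.mem_edgeFinset, SimpleGraph.mem_edgeSet] at he
        have ha1 : 1 ≤ d a := hd1 hab
        have hb1 : 1 ≤ d b := hd1 hab.symm
        have hmin : 1 ≤ min (d a) (d b) := le_min ha1 hb1
        have hmax : max (d a) (d b) ≤ n - 1 := max_le (hdn a) (hdn b)
        have hj : 0 < jdv G (min (d a) (d b)) (max (d a) (d b)) := by
          rw [hjdv]
          rw [Finset.card_pos]
          refine ⟨s(a, b), Finset.mem_filter.2 ⟨he, ?_⟩⟩
          rw [hpair _ _ (min_le_max) s(a, b)]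
          simp [hφ]
        simp only [hφ, Sym2.lift_mk, jdvSupport, Finset.mem_filter, Finset.mem_product,
          Finset.mem_Icc]
        refine ⟨⟨⟨hmin, le_trans (min_le_max) hmax⟩, ⟨le_trans hmin (min_le_max), hmax⟩⟩,
          min_le_max, hj⟩
    have key : ∑ p ∈ jdvSupport G, g p * (jdv G p.1 p.2 : ℝ) = ∑ e ∈ E, g (φ e) := by
      rw [← Finset.sum_fiberwise_of_maps_to hφE (fun e => g (φ e))]
      apply Finset.sum_congr rfl
      intro p hp
      have hik : p.1 ≤ p.2 := ((Finset.mem_filter.1 hp).2).1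
      have : ∑ e ∈ E.filter (fun e => φ e = p), g (φ e)
          = ∑ e ∈ E.filter (fun e => φ e = p), g p := by
        apply Finset.sum_congr rfl
        intro e he
        rw [(Finset.mem_filter.1 he).2]
      rw [this, Finset.sum_const, nsmul_eq_mul, mul_comm]
      congr 1
      rw [hjdv p.1 p.2]
      norm_cast
      congr 1
      apply Finset.filter_congr
      intro e _
      have := hpair p.1 p.2 hik e
      simp only [this]
    rw [key]
    have hedge : ∀ e ∈ E, g (φ e) = ∑ v : Fin n, if v ∈ e then ((d v : ℝ))⁻¹ else 0 := by
      intro e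
      induction e using Sym2.ind with
      | _ a b =>
        intro he
        have hab : G.Adj a b := by rwa [hE, SimpleGraph.mem_edgeFinset, SimpleGraph.mem_edgeSet] at he
        have ha1 : 1 ≤ d a := hd1 hab
        have hb1 : 1 ≤ d b := hd1 hab.symm
        have hne : a ≠ b := hab.ne
        have hset : (Finset.univ.filter (· ∈ s(a, b))) = {a, b} := by
          ext v; simp [Sym2.mem_iff]
        rw [← Finset.sum_filter, hset, Finset.sum_pair hne]
        have hda : (d a : ℝ) ≠ 0 := by positivity
        have hdb : (d b : ℝ) ≠ 0 := by positivity
        simp only [hφ, Sym2.lift_mk, hg]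
        have h1 : ((min (d a) (d b) : ℕ) : ℝ) + ((max (d a) (d b) : ℕ) : ℝ) = (d a : ℝ) + (d b : ℝ) := by
          push_cast
          rw [min_add_max]
        have h2 : ((min (d a) (d b) : ℕ) : ℝ) * ((max (d a) (d b) : ℕ) : ℝ) = (d a : ℝ) * (d b : ℝ) := by
          push_cast
          rw [min_mul_max]
        simp only [h1, h2]
        field_simp
        ring
    rw [Finset.sum_congr rfl hedge, Finset.sum_comm]
    have hinner : ∀ v : Fin n, ∑ e ∈ E, (if v ∈ e then ((d v : ℝ))⁻¹ else 0)
        = (d v : ℝ) * (d v : ℝ)⁻¹ := by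
      intro v
      rw [← Finset.sum_filter, Finset.sum_const, nsmul_eq_mul]
      congr 1
      have : (E.filter (fun e => v ∈ e)) = G.incidenceFinset v := by
        rw [SimpleGraph.incidenceFinset_eq_filter]
      rw [this]
      rw [SimpleGraph.card_incidenceFinset_eq_degree]
      exact_mod_cast (hdeg v).symm
    rw [Finset.sum_congr rfl (fun v _ => hinner v)]
    calc ∑ v : Fin n, (d v : ℝ) * (d v : ℝ)⁻¹ ≤ ∑ _v : Fin n, (1 : ℝ) := by
          apply Finset.sum_le_sum
          intro v _
          rcases eq_or_ne (d v) 0 with h | h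
          · simp [h]
          · rw [mul_inv_cancel₀ (by exact_mod_cast h)]
      _ = (n : ℝ) := by simp
end

section
/- For every finite simple graph G on n ≥ 2 vertices, there exists a finite simple graph G' on n vertices with no isolated vertices such that |A(G')| ≥ |A(G)|. Consequently, among all graphs on n vertices, the maximum of |A(G)| is attained by a graph without isolated vertices. -/
private lemma gdeg_eq_ncard {n : ℕ} (G : SimpleGraph (Fin n)) (w : Fin n) :
    gdeg G w = (G.neighborSet w).ncard := by
  unfold gdeg
  letI := Classical.decRel G.Adj
  show (G.neighborFinset w).card = _
  rw [SimpleGraph.neighborFinset_def, Set.ncard_eq_toFinset_card']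

private lemma ncard_ne_singleton {n : ℕ} (v : Fin n) :
    {u : Fin n | u ≠ v}.ncard = n - 1 := by
  have h : {u : Fin n | u ≠ v} = ↑(Finset.univ.erase v) := by
    ext u; simp
  rw [h, Set.ncard_coe_finset, Finset.card_erase_of_mem (Finset.mem_univ v),
    Finset.card_univ, Fintype.card_fin]

/-- `G` with vertex `v` joined to all other vertices. -/
private def addStar {n : ℕ} (G : SimpleGraph (Fin n)) (v : Fin n) : SimpleGraph (Fin n) where
  Adj a b := a ≠ b ∧ (G.Adj a b ∨ a = v ∨ b = v)
  symm := by
    constructor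
    intro a b h
    refine ⟨h.1.symm, ?_⟩
    rcases h.2 with h' | h' | h'
    · exact Or.inl h'.symm
    · exact Or.inr (Or.inr h')
    · exact Or.inr (Or.inl h')
  loopless := ⟨fun a h => h.1 rfl⟩

private lemma key {n : ℕ} (hn : 2 ≤ n) (G : SimpleGraph (Fin n)) :
    ∃ G' : SimpleGraph (Fin n),
      (∀ v, gdeg G' v ≠ 0) ∧ (jdvSupport G).card ≤ (jdvSupport G').card := by
  by_cases hiso : ∀ v, gdeg G v ≠ 0
  · exact ⟨G, hiso, le_rfl⟩
  push_neg at hiso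
  obtain ⟨v, hv⟩ := hiso
  -- v is isolated
  have hviso : ∀ u, ¬ G.Adj v u := by
    rw [gdeg_eq_ncard] at hv
    have hempty : G.neighborSet v = ∅ := (Set.ncard_eq_zero (Set.toFinite _)).mp hv
    intro u hu
    have : u ∈ G.neighborSet v := hu
    rw [hempty] at this
    exact this
  have hviso' : ∀ u, ¬ G.Adj u v := fun u h => hviso u h.symm
  set G' := addStar G v with hG'
  have hAdj : ∀ a b, G'.Adj a b ↔ a ≠ b ∧ (G.Adj a b ∨ a = v ∨ b = v) := fun a b => Iff.rfl
  -- degrees in G'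
  have hdeg_ne : ∀ w, w ≠ v → gdeg G' w = gdeg G w + 1 := by
    intro w hw
    rw [gdeg_eq_ncard, gdeg_eq_ncard]
    have hset : G'.neighborSet w = insert v (G.neighborSet w) := by
      ext u
      show (w ≠ u ∧ (G.Adj w u ∨ w = v ∨ u = v)) ↔ u ∈ insert v (G.neighborSet w)
      rw [Set.mem_insert_iff, SimpleGraph.mem_neighborSet]
      constructor
      · rintro ⟨hne, h | h | h⟩
        · exact Or.inr h
        · exact absurd h hw
        · exact Or.inl h
      · rintro (h | h)
        · exact ⟨fun e => hw (e.trans h), Or.inr (Or.inr h)⟩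
        · exact ⟨G.ne_of_adj h, Or.inl h⟩
    have hnot : v ∉ G.neighborSet w := hviso' w
    rw [hset, Set.ncard_insert_of_notMem hnot (Set.toFinite _)]
  have hdeg_v : gdeg G' v = n - 1 := by
    rw [gdeg_eq_ncard]
    have hset : G'.neighborSet v = {u : Fin n | u ≠ v} := by
      ext u
      show (v ≠ u ∧ (G.Adj v u ∨ v = v ∨ u = v)) ↔ u ∈ {u : Fin n | u ≠ v}
      constructor
      · rintro ⟨hne, _⟩; exact fun e => hne e.symm
      · intro h; exact ⟨fun e => h e.symm, Or.inr (Or.inl rfl)⟩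
    rw [hset, ncard_ne_singleton]
  -- degree bound in G: any adjacent vertex has degree ≤ n - 2
  have hbound : ∀ x, gdeg G x + 1 ≤ n - 1 := by
    intro x
    by_cases hx : x = v
    · rw [hx, hv]; omega
    · rw [gdeg_eq_ncard]
      have hsub : insert v (G.neighborSet x) ⊆ {u : Fin n | u ≠ x} := by
        rintro u (h | h)
        · simp only [Set.mem_setOf_eq]; rw [h]; exact fun e => hx e.symm
        · exact fun e => (G.loopless.irrefl x) (by rw [e] at h; exact h)
      have hnot : v ∉ G.neighborSet x := hviso' x
      have := Set.ncard_le_ncard hsub (Set.toFinite _)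
      rw [Set.ncard_insert_of_notMem hnot (Set.toFinite _),
        ncard_ne_singleton] at this
      exact this
  refine ⟨G', ?_, ?_⟩
  · intro w
    by_cases hw : w = v
    · rw [hw, hdeg_v]; omega
    · rw [hdeg_ne w hw]; omega
  · -- support injection (i, k) ↦ (i+1, k+1)
    apply Finset.card_le_card_of_injOn (fun p => (p.1 + 1, p.2 + 1))
    · intro p hp
      simp only [jdvSupport, Finset.mem_coe, Finset.mem_filter, Finset.mem_product, Finset.mem_Icc] at hp ⊢
      obtain ⟨⟨⟨hi1, hi2⟩, ⟨hk1, hk2⟩⟩, hik, hj⟩ := hp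
      -- extract an edge witnessing jdv G p.1 p.2 > 0
      obtain ⟨e, he, hmap⟩ := Set.nonempty_of_ncard_ne_zero (by omega : jdv G p.1 p.2 ≠ 0)
      induction e using Sym2.ind with
      | _ x y =>
        have hxy : G.Adj x y := he
        have hxv : x ≠ v := fun h => hviso y (h ▸ hxy)
        have hyv : y ≠ v := fun h => hviso' x (h ▸ hxy)
        rw [Sym2.map_pair_eq, Sym2.eq_iff] at hmap
        have hdx := hdeg_ne x hxv
        have hdy := hdeg_ne y hyv
        have hbx := hbound x
        have hby := hbound y
        have hedge : G'.Adj x y := ⟨G.ne_of_adj hxy, Or.inl hxy⟩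
        have hmem : s(x, y) ∈ {e ∈ G'.edgeSet | Sym2.map (gdeg G') e = s(p.1 + 1, p.2 + 1)} := by
          refine ⟨hedge, ?_⟩
          rw [Sym2.map_pair_eq, hdx, hdy]
          rcases hmap with ⟨h1, h2⟩ | ⟨h1, h2⟩
          · rw [h1, h2]
          · rw [h1, h2, Sym2.eq_swap]
        have hj' : 0 < jdv G' (p.1 + 1) (p.2 + 1) :=
          (Set.ncard_pos (Set.toFinite _)).mpr ⟨_, hmem⟩
        refine ⟨⟨⟨by omega, ?_⟩, by omega, ?_⟩, by omega, hj'⟩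
        · rcases hmap with ⟨h1, _⟩ | ⟨_, h2⟩
          · omega
          · omega
        · rcases hmap with ⟨_, h2⟩ | ⟨h1, _⟩
          · omega
          · omega
    · intro p _ q _ h
      simp only [Prod.mk.injEq] at h
      exact Prod.ext (by omega) (by omega)

theorem stmt3 (n : ℕ) (hn : 2 ≤ n) :
    (∀ G : SimpleGraph (Fin n), ∃ G' : SimpleGraph (Fin n),
        (∀ v, gdeg G' v ≠ 0) ∧ (jdvSupport G).card ≤ (jdvSupport G').card) ∧
    (∃ Gmax : SimpleGraph (Fin n), (∀ v, gdeg Gmax v ≠ 0) ∧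
        ∀ G : SimpleGraph (Fin n), (jdvSupport G).card ≤ (jdvSupport Gmax).card) := by
  refine ⟨key hn, ?_⟩
  obtain ⟨G0, hG0⟩ := Finite.exists_max (fun G : SimpleGraph (Fin n) => (jdvSupport G).card)
  obtain ⟨Gmax, hiso, hcard⟩ := key hn G0
  exact ⟨Gmax, hiso, fun G => le_trans (hG0 G) hcard⟩
end

section
/- For the half graphs H_n, the ratio |A(H_n)| / C(n,2) converges to 1/2 as n → ∞. -/
/-- The half graph on `n` vertices `v₁, …, vₙ` (represented by `Fin n`, vertex `vᵢ`
corresponding to index `i - 1`), with edges `vᵢvⱼ` for `i + j > n`, `i ≠ j`. -/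
def halfGraph (n : ℕ) : SimpleGraph (Fin n) :=
  SimpleGraph.fromRel (fun a b => n < (a.val + 1) + (b.val + 1))

lemma halfGraph_adj {n : ℕ} {u v : Fin n} :
    (halfGraph n).Adj u v ↔ u ≠ v ∧ n < u.val + v.val + 2 := by
  simp only [halfGraph, SimpleGraph.fromRel_adj]
  constructor
  · rintro ⟨h1, h2 | h2⟩ <;> exact ⟨h1, by omega⟩
  · rintro ⟨h1, h2⟩; exact ⟨h1, Or.inl (by omega)⟩

lemma gdeg_halfGraph {n : ℕ} (v : Fin n) :
    gdeg (halfGraph n) v = if 2 * (v.val + 1) ≤ n then v.val + 1 else v.val := by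
  classical
  have hd : gdeg (halfGraph n) v = ((Finset.univ : Finset (Fin n)).filter
      (fun w => (halfGraph n).Adj v w)).card := by
    rw [gdeg]
    rw [SimpleGraph.degree, SimpleGraph.neighborFinset_eq_filter]
  rw [hd]
  have hcard : ((Finset.univ : Finset (Fin n)).filter (fun w => (halfGraph n).Adj v w)).card
      = ((Finset.Ico (n - (v.val + 1)) n).erase v.val).card := by
    apply Finset.card_bij (fun w _ => w.val)
    · intro w hw
      simp only [Finset.mem_filter, Finset.mem_univ, true_and, halfGraph_adj] at hw
      have := w.isLt
      have hvn := v.isLt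
      have : w.val ≠ v.val := fun h => hw.1 (Fin.ext h).symm
      simp only [Finset.mem_erase, Finset.mem_Ico]
      omega
    · intro a ha b hb h; exact Fin.ext h
    · intro x hx
      simp only [Finset.mem_erase, Finset.mem_Ico] at hx
      refine ⟨⟨x, hx.2.2⟩, ?_, rfl⟩
      simp only [Finset.mem_filter, Finset.mem_univ, true_and, halfGraph_adj]
      have hvn := v.isLt
      constructor
      · intro h; exact hx.1 (congrArg Fin.val h).symm
      · omega
  rw [hcard]
  have hvn := v.isLt
  by_cases h : 2 * (v.val + 1) ≤ n
  · rw [Finset.erase_eq_of_notMem (by simp only [Finset.mem_Ico]; omega)]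
    rw [Nat.card_Ico]; simp only [if_pos h]; omega
  · rw [Finset.card_erase_of_mem (by simp only [Finset.mem_Ico]; omega)]
    rw [Nat.card_Ico]; simp only [if_neg h]; omega

lemma jdv_pos_iff {n : ℕ} (G : SimpleGraph (Fin n)) (a b : ℕ) :
    0 < jdv G a b ↔ ∃ u v, G.Adj u v ∧ s(gdeg G u, gdeg G v) = s(a, b) := by
  rw [jdv, Set.ncard_pos (Set.toFinite _)]
  simp only [Set.Nonempty, Set.mem_sep_iff, Sym2.exists, SimpleGraph.mem_edgeSet,
    Sym2.map_pair_eq]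

lemma jdv_halfGraph_pos_iff {n : ℕ} (hn : 2 ≤ n) {a b : ℕ}
    (ha : 1 ≤ a) (hab : a ≤ b) (hb : b ≤ n - 1) :
    0 < jdv (halfGraph n) a b ↔ n ≤ a + b ∧ (a < b ∨ 2 * a ≤ n) := by
  rw [jdv_pos_iff]
  constructor
  · rintro ⟨u, v, hadj, heq⟩
    rw [halfGraph_adj] at hadj
    rw [Sym2.eq_iff] at heq
    rw [gdeg_halfGraph, gdeg_halfGraph] at heq
    have hu := u.isLt
    have hv := v.isLt
    have hne : u.val ≠ v.val := fun h => hadj.1 (Fin.ext h)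
    have hs := hadj.2
    rcases heq with ⟨h1, h2⟩ | ⟨h1, h2⟩ <;> split_ifs at h1 h2 <;> omega
  · rintro ⟨hab2, hcase⟩
    by_cases h2a : 2 * a ≤ n
    · refine ⟨⟨a - 1, by omega⟩, ⟨b, by omega⟩, ?_, ?_⟩
      · rw [halfGraph_adj]
        constructor
        · intro h
          have := congrArg Fin.val h
          simp only at this
          omega
        · simp only; omega
      · rw [gdeg_halfGraph, gdeg_halfGraph, Sym2.eq_iff]
        left
        constructor
        · simp only; split_ifs with h <;> omega
        · simp only; split_ifs with h <;> omega
    · have hlt : a < b := by tauto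
      refine ⟨⟨a, by omega⟩, ⟨b, by omega⟩, ?_, ?_⟩
      · rw [halfGraph_adj]
        constructor
        · intro h
          have := congrArg Fin.val h
          simp only at this
          omega
        · simp only; omega
      · rw [gdeg_halfGraph, gdeg_halfGraph, Sym2.eq_iff]
        left
        constructor
        · simp only; split_ifs with h <;> omega
        · simp only; split_ifs with h <;> omega

def Ssup (n : ℕ) : Finset (ℕ × ℕ) :=
  (Finset.Icc 1 (n - 1)).biUnion (fun b =>
    (Finset.Ico (n - b) (if 2 * b ≤ n then b + 1 else b)).map
      ⟨fun a => (a, b), Prod.mk_left_injective b⟩)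

lemma jdvSupport_halfGraph_eq (n : ℕ) (hn : 2 ≤ n) :
    jdvSupport (halfGraph n) = Ssup n := by
  ext ⟨a, b⟩
  simp only [jdvSupport, Ssup, Finset.mem_filter, Finset.mem_product, Finset.mem_Icc,
    Finset.mem_biUnion, Finset.mem_map, Finset.mem_Ico, Function.Embedding.coeFn_mk,
    Prod.mk.injEq]
  constructor
  · rintro ⟨⟨⟨ha1, ha2⟩, hb1, hb2⟩, hab, hpos⟩
    rw [jdv_halfGraph_pos_iff hn ha1 hab hb2] at hpos
    refine ⟨b, ⟨hb1, hb2⟩, a, ?_, rfl, rfl⟩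
    rcases hpos with ⟨h1, h2⟩
    split_ifs with h <;> omega
  · rintro ⟨b', ⟨hb1, hb2⟩, a', ⟨ha1, ha2⟩, rfl, rfl⟩
    split_ifs at ha2 with h
    · have hc : 1 ≤ a' ∧ a' ≤ b' ∧ b' ≤ n - 1 := by omega
      refine ⟨⟨⟨hc.1, by omega⟩, hb1, hb2⟩, hc.2.1, ?_⟩
      rw [jdv_halfGraph_pos_iff hn hc.1 hc.2.1 hc.2.2]
      omega
    · have hc : 1 ≤ a' ∧ a' ≤ b' ∧ b' ≤ n - 1 := by omega
      refine ⟨⟨⟨hc.1, by omega⟩, hb1, hb2⟩, hc.2.1, ?_⟩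
      rw [jdv_halfGraph_pos_iff hn hc.1 hc.2.1 hc.2.2]
      omega

lemma Ssup_card (n : ℕ) (hn : 2 ≤ n) :
    (Ssup n).card = ∑ b ∈ Finset.Icc 1 (n - 1),
      ((if 2 * b ≤ n then b + 1 else b) - (n - b)) := by
  rw [Ssup, Finset.card_biUnion]
  · apply Finset.sum_congr rfl
    intro b _
    rw [Finset.card_map, Nat.card_Ico]
  · intro x _ y _ hxy
    simp only [Finset.disjoint_left, Finset.mem_map, Function.Embedding.coeFn_mk]
    rintro ⟨c, d⟩ ⟨a1, _, h1⟩ ⟨a2, _, h2⟩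
    exact absurd (by rw [Prod.mk.injEq] at h1 h2; omega) hxy

lemma aux1 (S m : ℕ) (hm : 1 ≤ m) (hg : S * 2 = (m - 1) * (m - 1 - 1)) :
    1 + (2 * S + (m - 1) * 2) = m * m + 1 - m := by
  obtain ⟨p, rfl⟩ : ∃ p, m = p + 1 := ⟨m - 1, by omega⟩
  simp only [Nat.add_sub_cancel] at hg ⊢
  cases p with
  | zero => simp at hg; omega
  | succ q =>
    simp only [Nat.add_sub_cancel] at hg
    have hle : (q + 1 + 1) ≤ (q + 1 + 1) * (q + 1 + 1) + 1 := by nlinarith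
    zify [hle] at hg ⊢
    linear_combination hg

lemma aux2 (S m : ℕ) (hm : 1 ≤ m) (hg : S * 2 = m * (m - 1)) :
    0 + (2 * S + m * 1) = m * m := by
  zify [hm] at hg ⊢
  linear_combination hg

lemma sum_eval (n : ℕ) (hn : 2 ≤ n) :
    ∑ b ∈ Finset.Icc 1 (n - 1), ((if 2 * b ≤ n then b + 1 else b) - (n - b)) =
      if n % 2 = 0 then n / 2 * (n / 2) + 1 - n / 2 else n / 2 * (n / 2) := by
  set m := n / 2 with hm
  have hmn : m + 1 ≤ n := by omega
  have hIcc : Finset.Icc 1 (n - 1) = Finset.Ico 1 n := by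
    rw [← Finset.Ico_add_one_right_eq_Icc]
    congr 1
    omega
  rw [hIcc, ← Finset.sum_Ico_consecutive _ (by omega : 1 ≤ m + 1) hmn]
  have hpart1 : ∑ b ∈ Finset.Ico 1 (m + 1), ((if 2 * b ≤ n then b + 1 else b) - (n - b)) =
      if n % 2 = 0 then 1 else 0 := by
    have : ∀ b ∈ Finset.Ico 1 (m + 1), ((if 2 * b ≤ n then b + 1 else b) - (n - b)) =
        if b = m then (if n % 2 = 0 then 1 else 0) else 0 := by
      intro b hb
      rw [Finset.mem_Ico] at hb
      split_ifs <;> omega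
    rw [Finset.sum_congr rfl this, Finset.sum_ite_eq']
    rw [if_pos (by rw [Finset.mem_Ico]; omega)]
  have hpart2 : ∑ b ∈ Finset.Ico (m + 1) n, ((if 2 * b ≤ n then b + 1 else b) - (n - b)) =
      2 * (∑ t ∈ Finset.range (n - (m + 1)), t) + (n - (m + 1)) * (2 * (m + 1) - n) := by
    have : ∀ b ∈ Finset.Ico (m + 1) n, ((if 2 * b ≤ n then b + 1 else b) - (n - b)) =
        2 * b - n := by
      intro b hb
      rw [Finset.mem_Ico] at hb
      split_ifs <;> omega
    rw [Finset.sum_congr rfl this, Finset.sum_Ico_eq_sum_range]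
    have : ∀ t ∈ Finset.range (n - (m + 1)), 2 * (m + 1 + t) - n = 2 * t + (2 * (m + 1) - n) := by
      intro t _
      omega
    rw [Finset.sum_congr rfl this, Finset.sum_add_distrib, Finset.sum_const, Finset.card_range,
      ← Finset.mul_sum, smul_eq_mul]
  rw [hpart1, hpart2]
  have hgauss := Finset.sum_range_id_mul_two (n - (m + 1))
  set S := ∑ t ∈ Finset.range (n - (m + 1)), t with hS
  have hcases : n = 2 * m ∨ n = 2 * m + 1 := by omega
  rcases hcases with h | h
  · rw [if_pos (by omega), if_pos (by omega)]
    have h1 : n - (m + 1) = m - 1 := by omega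
    have h2 : 2 * (m + 1) - n = 2 := by omega
    rw [h1] at hgauss
    rw [h1, h2]
    exact aux1 S m (by omega) hgauss
  · rw [if_neg (by omega), if_neg (by omega)]
    have h1 : n - (m + 1) = m := by omega
    have h2 : 2 * (m + 1) - n = 1 := by omega
    rw [h1] at hgauss
    rw [h1, h2]
    exact aux2 S m (by omega) hgauss

lemma card_bounds (n : ℕ) (hn : 2 ≤ n) :
    n * (n - 1) ≤ 4 * (jdvSupport (halfGraph n)).card + 8 * n ∧
    4 * (jdvSupport (halfGraph n)).card ≤ n * (n - 1) + 8 * n := by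
  rw [jdvSupport_halfGraph_eq n hn, Ssup_card n hn, sum_eval n hn]
  obtain ⟨m, hm⟩ : ∃ m, n / 2 = m := ⟨_, rfl⟩
  rw [hm]
  have hcases : n = 2 * m ∨ n = 2 * m + 1 := by omega
  have hm1 : 1 ≤ m := by omega
  have hm2 : m ≤ m * m := Nat.le_mul_of_pos_left m (by omega)
  rcases hcases with h | h
  · subst h
    rw [if_pos (by omega)]
    have hm3 : m ≤ m * m + 1 := le_trans hm2 (Nat.le_succ _)
    zify [hm3, (by omega : 1 ≤ 2 * m)]
    constructor <;> nlinarith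
  · subst h
    rw [if_neg (by omega)]
    zify [(by omega : 1 ≤ 2 * m + 1)]
    constructor <;> nlinarith

theorem stmt5 :
    Filter.Tendsto (fun n : ℕ => ((jdvSupport (halfGraph n)).card : ℝ) / (n.choose 2 : ℝ))
      Filter.atTop (nhds (1 / 2)) := by
  have hx1 : Filter.Tendsto (fun n : ℕ => (n : ℝ) - 1) Filter.atTop Filter.atTop :=
    Filter.tendsto_atTop_add_const_right _ _ tendsto_natCast_atTop_atTop
  have hinv : Filter.Tendsto (fun n : ℕ => ((n : ℝ) - 1)⁻¹) Filter.atTop (nhds 0) :=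
    hx1.inv_tendsto_atTop
  have hg : Filter.Tendsto (fun n : ℕ => 4 / ((n : ℝ) - 1)) Filter.atTop (nhds 0) := by
    have := hinv.const_mul (4 : ℝ)
    simpa [div_eq_mul_inv] using this
  have key : Filter.Tendsto
      (fun n : ℕ => ((jdvSupport (halfGraph n)).card : ℝ) / (n.choose 2 : ℝ) - 1 / 2)
      Filter.atTop (nhds 0) := by
    apply squeeze_zero_norm' _ hg
    filter_upwards [Filter.eventually_ge_atTop 2] with n hn
    set x : ℝ := (n : ℝ) with hxdef
    have h1n : (1:ℕ) ≤ n := by omega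
    have hx : (2 : ℝ) ≤ x := by rw [hxdef]; exact_mod_cast hn
    have hx1' : (0 : ℝ) < x - 1 := by linarith
    have hC : ((n.choose 2 : ℕ) : ℝ) = x * (x - 1) / 2 := Nat.cast_choose_two ℝ n
    have hCpos : (0 : ℝ) < ((n.choose 2 : ℕ) : ℝ) := by rw [hC]; nlinarith
    obtain ⟨hb1, hb2⟩ := card_bounds n hn
    have hcast1 : x * (x - 1) ≤ 4 * ((jdvSupport (halfGraph n)).card : ℝ) + 8 * x := by
      have h := (Nat.cast_le (α := ℝ)).mpr hb1
      push_cast [Nat.cast_sub h1n] at h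
      rw [hxdef]
      linarith
    have hcast2 : 4 * ((jdvSupport (halfGraph n)).card : ℝ) ≤ x * (x - 1) + 8 * x := by
      have h := (Nat.cast_le (α := ℝ)).mpr hb2
      push_cast [Nat.cast_sub h1n] at h
      rw [hxdef]
      linarith
    have expand1 : (1 / 2 + 4 / (x - 1)) * (x * (x - 1) / 2) = x * (x - 1) / 4 + 2 * x := by
      field_simp
      ring
    have expand2 : (1 / 2 - 4 / (x - 1)) * (x * (x - 1) / 2) = x * (x - 1) / 4 - 2 * x := by
      field_simp
      ring
    have hA : ((jdvSupport (halfGraph n)).card : ℝ) / (n.choose 2 : ℝ) ≤ 1 / 2 + 4 / (x - 1) := by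
      rw [div_le_iff₀ hCpos, hC, expand1]
      linarith
    have hB : 1 / 2 - 4 / (x - 1) ≤ ((jdvSupport (halfGraph n)).card : ℝ) / (n.choose 2 : ℝ) := by
      rw [le_div_iff₀ hCpos, hC, expand2]
      linarith
    rw [Real.norm_eq_abs, abs_le]
    constructor <;> [linarith; linarith]
  have := key.add_const (1 / 2)
  simpa using this
end

section
/- For every integer n ≥ 2, α_n ≤ ((n−1)/n)·α_n' + 1/n, where α_n is the optimum of the discrete relaxation and α_n' is the optimum of the continuous relaxation. -/
open MeasureTheory

/-- The optimum `αₙ` of the discrete relaxation: the supremum (maximum) of `|A| / C(n,2)` over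
all `A ⊆ Pₙ = {(i,j) : 1 ≤ i ≤ j ≤ n-1}` with `∑_{(k₁,k₂) ∈ A} (k₁+k₂)/(k₁k₂) ≤ n`. -/
noncomputable def alphaDisc (n : ℕ) : ℝ :=
  sSup {r : ℝ | ∃ A : Finset (ℕ × ℕ),
    (∀ p ∈ A, 1 ≤ p.1 ∧ p.1 ≤ p.2 ∧ p.2 ≤ n - 1) ∧
    (∑ p ∈ A, ((p.1 : ℝ) + (p.2 : ℝ)) / ((p.1 : ℝ) * (p.2 : ℝ))) ≤ (n : ℝ) ∧
    r = (A.card : ℝ) / (n.choose 2 : ℝ)}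

/-- The optimum `αₙ'` of the continuous relaxation: the supremum of `μ(A') / (n-1)²` over all
Lebesgue-measurable `A' ⊆ [1,n] × [1,n]` symmetric about the line `y = x` with
`∬_{A'} (1/x) dx dy ≤ n`. -/
noncomputable def alphaCont (n : ℕ) : ℝ :=
  sSup {r : ℝ | ∃ A' : Set (ℝ × ℝ),
    NullMeasurableSet A' (volume : Measure (ℝ × ℝ)) ∧
    A' ⊆ Set.Icc (1 : ℝ) (n : ℝ) ×ˢ Set.Icc (1 : ℝ) (n : ℝ) ∧
    (∀ x y : ℝ, (x, y) ∈ A' ↔ (y, x) ∈ A') ∧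
    (∫ p in A', 1 / p.1 ∂(volume : Measure (ℝ × ℝ))) ≤ (n : ℝ) ∧
    r = ((volume : Measure (ℝ × ℝ)) A').toReal / ((n : ℝ) - 1) ^ 2}

open Set in
/-- The unit half-open square with lower-left corner at a lattice point. -/
noncomputable def sqSet (p : ℕ × ℕ) : Set (ℝ × ℝ) :=
  Set.Ico (p.1 : ℝ) (p.1 + 1) ×ˢ Set.Ico (p.2 : ℝ) (p.2 + 1)

lemma sqSet_meas (p : ℕ × ℕ) : MeasurableSet (sqSet p) :=
  measurableSet_Ico.prod measurableSet_Ico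

lemma sqSet_vol (p : ℕ × ℕ) : volume (sqSet p) = 1 := by
  simp [sqSet, Measure.volume_eq_prod ℝ ℝ, Measure.prod_prod, Real.volume_Ico]

lemma sqSet_disj {p q : ℕ × ℕ} (h : p ≠ q) : Disjoint (sqSet p) (sqSet q) := by
  rw [Set.disjoint_left]
  rintro ⟨x, y⟩ ⟨⟨hx1, hx2⟩, hy1, hy2⟩ ⟨⟨hx1', hx2'⟩, hy1', hy2'⟩
  apply h
  have e1 : (p.1 : ℝ) < (q.1 : ℝ) + 1 := lt_of_le_of_lt hx1 hx2'
  have e2 : (q.1 : ℝ) < (p.1 : ℝ) + 1 := lt_of_le_of_lt hx1' hx2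
  have e3 : (p.2 : ℝ) < (q.2 : ℝ) + 1 := lt_of_le_of_lt hy1 hy2'
  have e4 : (q.2 : ℝ) < (p.2 : ℝ) + 1 := lt_of_le_of_lt hy1' hy2
  have f1 : p.1 < q.1 + 1 := by exact_mod_cast e1
  have f2 : q.1 < p.1 + 1 := by exact_mod_cast e2
  have f3 : p.2 < q.2 + 1 := by exact_mod_cast e3
  have f4 : q.2 < p.2 + 1 := by exact_mod_cast e4
  exact Prod.ext (by omega) (by omega)

lemma sqSet_intOn {p : ℕ × ℕ} (hp : 1 ≤ p.1) :
    IntegrableOn (fun z : ℝ × ℝ => 1 / z.1) (sqSet p) volume := by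
  apply Measure.integrableOn_of_bounded (M := 1)
  · rw [sqSet_vol]; exact ENNReal.one_ne_top
  · exact (measurable_const.div measurable_fst).aestronglyMeasurable
  · refine Filter.eventually_of_mem (self_mem_ae_restrict (sqSet_meas p)) ?_
    rintro ⟨x, y⟩ ⟨⟨hx1, _⟩, _⟩
    have h1 : (1 : ℝ) ≤ x := le_trans (by exact_mod_cast hp) hx1
    rw [Real.norm_eq_abs, abs_of_nonneg (by positivity)]
    rw [div_le_one (by linarith)]; linarith

open Set in
lemma sqSet_integral {p : ℕ × ℕ} (hp : 1 ≤ p.1) :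
    (∫ z in sqSet p, 1 / z.1 ∂(volume : Measure (ℝ × ℝ)))
      = Real.log (((p.1 : ℝ) + 1) / (p.1 : ℝ)) := by
  have hp1 : (1 : ℝ) ≤ (p.1 : ℝ) := by exact_mod_cast hp
  have hInt := sqSet_intOn hp
  rw [sqSet] at hInt ⊢
  rw [Measure.volume_eq_prod ℝ ℝ] at hInt ⊢
  rw [MeasureTheory.setIntegral_prod _ hInt]
  have inner : ∀ x : ℝ, (∫ _ in Set.Ico (p.2 : ℝ) (p.2 + 1), 1 / x) = 1 / x := by
    intro x
    rw [setIntegral_const]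
    simp [Real.volume_Ico]
  simp_rw [inner]
  rw [setIntegral_congr_set Ico_ae_eq_Ioc,
    ← intervalIntegral.integral_of_le (by linarith : (p.1 : ℝ) ≤ (p.1 : ℝ) + 1)]
  rw [integral_one_div]
  rw [Set.uIcc_of_le (by linarith)]
  rintro ⟨h0, _⟩
  linarith

lemma log_succ_div_le {a : ℝ} (ha : 1 ≤ a) : Real.log ((a + 1) / a) ≤ 1 / a := by
  have h0 : (0 : ℝ) < a := by linarith
  have h := Real.log_le_sub_one_of_pos (show (0:ℝ) < (a+1)/a by positivity)
  have he : (a + 1) / a - 1 = 1 / a := by field_simp; ring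
  linarith [he ▸ h]

theorem stmt7 (n : ℕ) (hn : 2 ≤ n) :
    alphaDisc n ≤ (((n : ℝ) - 1) / (n : ℝ)) * alphaCont n + 1 / (n : ℝ) := by
  classical
  have h2n : (2 : ℝ) ≤ (n : ℝ) := by exact_mod_cast hn
  have hn0 : (0 : ℝ) < (n : ℝ) := by linarith
  have hn1' : (0 : ℝ) < (n : ℝ) - 1 := by linarith
  have hcastn1 : ((n - 1 : ℕ) : ℝ) = (n : ℝ) - 1 := by
    have h1n : (1 : ℕ) ≤ n := by omega
    rw [Nat.cast_sub h1n, Nat.cast_one]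
  set S : Set ℝ := {r : ℝ | ∃ A' : Set (ℝ × ℝ),
    NullMeasurableSet A' (volume : Measure (ℝ × ℝ)) ∧
    A' ⊆ Set.Icc (1 : ℝ) (n : ℝ) ×ˢ Set.Icc (1 : ℝ) (n : ℝ) ∧
    (∀ x y : ℝ, (x, y) ∈ A' ↔ (y, x) ∈ A') ∧
    (∫ p in A', 1 / p.1 ∂(volume : Measure (ℝ × ℝ))) ≤ (n : ℝ) ∧
    r = ((volume : Measure (ℝ × ℝ)) A').toReal / ((n : ℝ) - 1) ^ 2} with hS
  have hContEq : alphaCont n = sSup S := rfl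
  have hsqvol : volume (Set.Icc (1:ℝ) (n:ℝ) ×ˢ Set.Icc (1:ℝ) (n:ℝ))
      = ENNReal.ofReal ((n:ℝ)-1) * ENNReal.ofReal ((n:ℝ)-1) := by
    rw [Measure.volume_eq_prod ℝ ℝ, Measure.prod_prod, Real.volume_Icc]
  have hbdd : BddAbove S := by
    refine ⟨1, ?_⟩
    rintro r ⟨A', _, hsub, _, _, hr⟩
    have hle : volume A' ≤ volume (Set.Icc (1:ℝ) (n:ℝ) ×ˢ Set.Icc (1:ℝ) (n:ℝ)) :=
      measure_mono hsub
    have hfin : volume (Set.Icc (1:ℝ) (n:ℝ) ×ˢ Set.Icc (1:ℝ) (n:ℝ)) ≠ ⊤ := by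
      rw [hsqvol]; exact ENNReal.mul_ne_top ENNReal.ofReal_ne_top ENNReal.ofReal_ne_top
    have htr : (volume A').toReal ≤ ((n:ℝ)-1)^2 := by
      have h' := ENNReal.toReal_mono hfin hle
      rw [hsqvol, ENNReal.toReal_mul, ENNReal.toReal_ofReal (by linarith)] at h'
      nlinarith [h']
    rw [hr, div_le_one (by positivity)]
    exact htr
  have hzero : (0:ℝ) ∈ S := by
    refine ⟨∅, MeasurableSet.empty.nullMeasurableSet, Set.empty_subset _, by simp, ?_, by simp⟩
    simp only [Measure.restrict_empty, integral_zero_measure]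
    positivity
  have hCont0 : 0 ≤ alphaCont n := by
    rw [hContEq]; exact le_csSup hbdd hzero
  rw [alphaDisc]
  apply Real.sSup_le
  · rintro r ⟨A, hA, hsum, hr⟩
    set B : Finset (ℕ × ℕ) := A ∪ A.image Prod.swap with hB
    have hBmem : ∀ p ∈ B, 1 ≤ p.1 ∧ p.1 ≤ n - 1 ∧ 1 ≤ p.2 ∧ p.2 ≤ n - 1 := by
      intro p hp
      rcases Finset.mem_union.1 hp with h | h
      · obtain ⟨h1, h2, h3⟩ := hA p h; omega
      · obtain ⟨q, hq, rfl⟩ := Finset.mem_image.1 h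
        obtain ⟨h1, h2, h3⟩ := hA q hq
        simp only [Prod.fst_swap, Prod.snd_swap]
        omega
    have hBswap : ∀ p : ℕ × ℕ, p ∈ B → p.swap ∈ B := by
      intro p hp
      rcases Finset.mem_union.1 hp with h | h
      · exact Finset.mem_union_right _ (Finset.mem_image_of_mem _ h)
      · obtain ⟨q, hq, rfl⟩ := Finset.mem_image.1 h
        rw [Prod.swap_swap]; exact Finset.mem_union_left _ hq
    set A' : Set (ℝ × ℝ) := ⋃ p ∈ B, sqSet p with hA'
    have hpair : Set.PairwiseDisjoint (↑B : Set (ℕ × ℕ)) sqSet :=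
      fun p _ q _ hpq => sqSet_disj hpq
    have hmeasA' : MeasurableSet A' := B.measurableSet_biUnion (fun p _ => sqSet_meas p)
    have hvol : volume A' = (B.card : ENNReal) := by
      rw [hA', measure_biUnion_finset hpair (fun p _ => sqSet_meas p)]
      simp [sqSet_vol]
    have hsubA' : A' ⊆ Set.Icc (1:ℝ) (n:ℝ) ×ˢ Set.Icc (1:ℝ) (n:ℝ) := by
      intro z hz
      simp only [hA', Set.mem_iUnion] at hz
      obtain ⟨p, hp, hzp⟩ := hz
      obtain ⟨h1, h2, h3, h4⟩ := hBmem p hp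
      obtain ⟨⟨hz1, hz2⟩, hz3, hz4⟩ := hzp
      have c1 : (1:ℝ) ≤ (p.1:ℝ) := by exact_mod_cast h1
      have c2 : (p.1:ℝ) ≤ (n:ℝ) - 1 := by rw [← hcastn1]; exact_mod_cast h2
      have c3 : (1:ℝ) ≤ (p.2:ℝ) := by exact_mod_cast h3
      have c4 : (p.2:ℝ) ≤ (n:ℝ) - 1 := by rw [← hcastn1]; exact_mod_cast h4
      exact ⟨⟨by linarith, by linarith⟩, by linarith, by linarith⟩
    have hsym : ∀ x y : ℝ, (x,y) ∈ A' ↔ (y,x) ∈ A' := by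
      have key : ∀ x y : ℝ, (x,y) ∈ A' → (y,x) ∈ A' := by
        intro x y h
        simp only [hA', Set.mem_iUnion] at h ⊢
        obtain ⟨p, hp, hzp⟩ := h
        exact ⟨p.swap, hBswap p hp, ⟨hzp.2, hzp.1⟩⟩
      exact fun x y => ⟨key x y, key y x⟩
    have hint : (∫ z in A', 1 / z.1 ∂(volume : Measure (ℝ×ℝ))) ≤ (n:ℝ) := by
      rw [hA', integral_biUnion_finset B (fun p _ => sqSet_meas p) hpair
        (fun p hp => sqSet_intOn (hBmem p hp).1)]
      have step1 : ∀ p ∈ B,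
          (∫ z in sqSet p, 1 / z.1 ∂(volume : Measure (ℝ×ℝ))) ≤ 1 / (p.1:ℝ) := by
        intro p hp
        rw [sqSet_integral (hBmem p hp).1]
        exact log_succ_div_le (by exact_mod_cast (hBmem p hp).1)
      calc ∑ p ∈ B, ∫ z in sqSet p, 1/z.1 ∂(volume : Measure (ℝ×ℝ))
          ≤ ∑ p ∈ B, 1/(p.1:ℝ) := Finset.sum_le_sum step1
        _ ≤ ∑ p ∈ A, 1/(p.1:ℝ) + ∑ p ∈ A.image Prod.swap, 1/(p.1:ℝ) := by
            have hui : (∑ p ∈ A ∪ A.image Prod.swap, 1/(p.1:ℝ))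
                  + ∑ p ∈ A ∩ A.image Prod.swap, 1/(p.1:ℝ)
                = (∑ p ∈ A, 1/(p.1:ℝ)) + ∑ p ∈ A.image Prod.swap, 1/(p.1:ℝ) :=
              Finset.sum_union_inter
            have hpos : 0 ≤ ∑ p ∈ A ∩ A.image Prod.swap, 1/(p.1:ℝ) :=
              Finset.sum_nonneg (fun p _ => by positivity)
            rw [hB]; linarith
        _ = ∑ p ∈ A, (1/(p.1:ℝ) + 1/(p.2:ℝ)) := by
            rw [Finset.sum_image (fun p _ q _ h => Prod.swap_injective h)]
            simp only [Prod.fst_swap]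
            rw [← Finset.sum_add_distrib]
        _ ≤ (n:ℝ) := by
            refine le_trans (le_of_eq (Finset.sum_congr rfl ?_)) hsum
            intro p hp
            obtain ⟨h1, h2, _⟩ := hA p hp
            have a1 : (0:ℝ) < (p.1:ℝ) := by exact_mod_cast Nat.lt_of_lt_of_le Nat.zero_lt_one h1
            have a2 : (0:ℝ) < (p.2:ℝ) := by
              exact_mod_cast Nat.lt_of_lt_of_le Nat.zero_lt_one (le_trans h1 h2)
            field_simp
            ring
    have hrmem : ((B.card : ℝ) / ((n:ℝ)-1)^2) ∈ S := by
      refine ⟨A', hmeasA'.nullMeasurableSet, hsubA', hsym, hint, ?_⟩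
      rw [hvol]; simp
    have h1 : (B.card : ℝ) / ((n:ℝ)-1)^2 ≤ alphaCont n := by
      rw [hContEq]; exact le_csSup hbdd hrmem
    have hinter : (A ∩ A.image Prod.swap).card ≤ n - 1 := by
      have hc : (A ∩ A.image Prod.swap).card ≤ (Finset.Icc 1 (n-1)).card := by
        apply Finset.card_le_card_of_injOn (fun p => p.1)
        · intro p hp
          obtain ⟨hpA, _⟩ := Finset.mem_inter.1 hp
          obtain ⟨h1, h2, h3⟩ := hA p hpA
          exact Finset.mem_Icc.2 ⟨h1, le_trans h2 h3⟩
        · have dg : ∀ x ∈ A ∩ A.image Prod.swap, x.1 = x.2 := by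
            intro x hx
            obtain ⟨hxA, hxI⟩ := Finset.mem_inter.1 hx
            obtain ⟨y, hy, hyx⟩ := Finset.mem_image.1 hxI
            have hx12 : x.1 ≤ x.2 := (hA x hxA).2.1
            have hy12 : y.1 ≤ y.2 := (hA y hy).2.1
            rw [← hyx] at hx12 ⊢
            simp only [Prod.fst_swap, Prod.snd_swap] at hx12 ⊢
            omega
          intro p hp q hq hpq
          simp only [Finset.mem_coe] at hp hq
          have d1 := dg p hp
          have d2 := dg q hq
          exact Prod.ext hpq (by simp only at hpq; omega)
      simpa [Nat.card_Icc] using hc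
    have hcard : 2 * A.card ≤ B.card + (n - 1) := by
      have hcui := Finset.card_union_add_card_inter A (A.image Prod.swap)
      have himg : (A.image Prod.swap).card = A.card :=
        Finset.card_image_of_injective _ Prod.swap_injective
      rw [hB]
      omega
    have hcardR : 2 * (A.card : ℝ) ≤ (B.card : ℝ) + ((n:ℝ) - 1) := by
      rw [← hcastn1]; exact_mod_cast hcard
    rw [hr, Nat.cast_choose_two]
    have key : (A.card : ℝ) / ((n:ℝ) * ((n:ℝ)-1) / 2)
        ≤ ((n:ℝ)-1)/(n:ℝ) * ((B.card:ℝ)/((n:ℝ)-1)^2) + 1/(n:ℝ) := by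
      have e : ((n:ℝ)-1)/(n:ℝ) * ((B.card:ℝ)/((n:ℝ)-1)^2) + 1/(n:ℝ)
          = ((B.card:ℝ) + ((n:ℝ)-1)) / ((n:ℝ)*((n:ℝ)-1)) := by
        field_simp
      rw [e, div_le_div_iff₀ (by positivity) (by positivity)]
      nlinarith [hcardR]
    refine le_trans key ?_
    have hmul : ((n:ℝ)-1)/(n:ℝ) * ((B.card:ℝ)/((n:ℝ)-1)^2)
        ≤ ((n:ℝ)-1)/(n:ℝ) * alphaCont n :=
      mul_le_mul_of_nonneg_left h1 (by positivity)
    linarith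
  · have hmul : (0:ℝ) ≤ ((n:ℝ)-1)/(n:ℝ) * alphaCont n := mul_nonneg (by positivity) hCont0
    have hinv : (0:ℝ) ≤ 1/(n:ℝ) := by positivity
    linarith
end

section
/- limsup_{n→∞} α_n ≤ limsup_{n→∞} α_n', where α_n is the optimum of the discrete relaxation and α_n' is the optimum of the continuous relaxation. -/
open MeasureTheory

namespace Stmt8Aux

open Set

/-- The feasible set of the continuous relaxation. -/
def contSet (n : ℕ) : Set ℝ :=
  {r : ℝ | ∃ A' : Set (ℝ × ℝ),
    NullMeasurableSet A' (volume : Measure (ℝ × ℝ)) ∧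
    A' ⊆ Set.Icc (1 : ℝ) (n : ℝ) ×ˢ Set.Icc (1 : ℝ) (n : ℝ) ∧
    (∀ x y : ℝ, (x, y) ∈ A' ↔ (y, x) ∈ A') ∧
    (∫ p in A', 1 / p.1 ∂(volume : Measure (ℝ × ℝ))) ≤ (n : ℝ) ∧
    r = ((volume : Measure (ℝ × ℝ)) A').toReal / ((n : ℝ) - 1) ^ 2}

/-- The feasible set of the discrete relaxation. -/
def discSet (n : ℕ) : Set ℝ :=
  {r : ℝ | ∃ A : Finset (ℕ × ℕ),
    (∀ p ∈ A, 1 ≤ p.1 ∧ p.1 ≤ p.2 ∧ p.2 ≤ n - 1) ∧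
    (∑ p ∈ A, ((p.1 : ℝ) + (p.2 : ℝ)) / ((p.1 : ℝ) * (p.2 : ℝ))) ≤ (n : ℝ) ∧
    r = (A.card : ℝ) / (n.choose 2 : ℝ)}

lemma alphaCont_eq (n : ℕ) : alphaCont n = sSup (contSet n) := rfl
lemma alphaDisc_eq (n : ℕ) : alphaDisc n = sSup (discSet n) := rfl

lemma zero_mem_contSet (n : ℕ) : (0 : ℝ) ∈ contSet n := by
  refine ⟨∅, MeasurableSet.empty.nullMeasurableSet, Set.empty_subset _, by simp, ?_, by simp⟩
  simp

lemma zero_mem_discSet (n : ℕ) : (0 : ℝ) ∈ discSet n := by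
  refine ⟨∅, by simp, by simp, by simp⟩

lemma contSet_le_one {n : ℕ} (hn : 2 ≤ n) {r : ℝ} (hr : r ∈ contSet n) : r ≤ 1 := by
  obtain ⟨A', _, hsub, _, _, rfl⟩ := hr
  have hn1 : (1 : ℝ) ≤ (n : ℝ) - 1 := by
    have : (2 : ℝ) ≤ (n : ℝ) := by exact_mod_cast hn
    linarith
  have hbox : volume (Set.Icc (1 : ℝ) (n : ℝ) ×ˢ Set.Icc (1 : ℝ) (n : ℝ))
      = ENNReal.ofReal ((n : ℝ) - 1) * ENNReal.ofReal ((n : ℝ) - 1) := by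
    rw [Measure.volume_eq_prod, Measure.prod_prod, Real.volume_Icc]
  have hμ : volume A' ≤ ENNReal.ofReal ((n : ℝ) - 1) * ENNReal.ofReal ((n : ℝ) - 1) :=
    hbox ▸ measure_mono hsub
  have htop : ENNReal.ofReal ((n : ℝ) - 1) * ENNReal.ofReal ((n : ℝ) - 1) ≠ ⊤ :=
    ENNReal.mul_ne_top ENNReal.ofReal_ne_top ENNReal.ofReal_ne_top
  have h1 : (volume A').toReal ≤ ((n : ℝ) - 1) * ((n : ℝ) - 1) := by
    have := ENNReal.toReal_mono htop hμ
    rwa [ENNReal.toReal_mul, ENNReal.toReal_ofReal (by linarith)] at this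
  rw [div_le_one (by positivity)]
  calc (volume A').toReal ≤ ((n : ℝ) - 1) * ((n : ℝ) - 1) := h1
    _ = ((n : ℝ) - 1) ^ 2 := by ring

lemma contSet_bddAbove {n : ℕ} (hn : 2 ≤ n) : BddAbove (contSet n) :=
  ⟨1, fun _ hr => contSet_le_one hn hr⟩

lemma alphaCont_nonneg {n : ℕ} (hn : 2 ≤ n) : 0 ≤ alphaCont n := by
  rw [alphaCont_eq]
  exact le_csSup (contSet_bddAbove hn) (zero_mem_contSet n)

lemma alphaCont_le_one {n : ℕ} (hn : 2 ≤ n) : alphaCont n ≤ 1 := by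
  rw [alphaCont_eq]
  exact csSup_le ⟨0, zero_mem_contSet n⟩ (fun _ hr => contSet_le_one hn hr)

lemma alphaDisc_nonneg {n : ℕ} (hn : 2 ≤ n) : 0 ≤ alphaDisc n := by
  rw [alphaDisc_eq]
  refine le_csSup ⟨((n : ℝ) - 1) ^ 2 / (n.choose 2 : ℝ), ?_⟩ (zero_mem_discSet n)
  rintro r ⟨A, hA, _, rfl⟩
  have hC2 : (0 : ℝ) < (n.choose 2 : ℝ) := by
    have : 0 < n.choose 2 := Nat.choose_pos hn
    exact_mod_cast this
  have hsubA : A ⊆ Finset.Icc 1 (n - 1) ×ˢ Finset.Icc 1 (n - 1) := by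
    intro p hp
    obtain ⟨h1, h2, h3⟩ := hA p hp
    exact Finset.mem_product.2
      ⟨Finset.mem_Icc.2 ⟨h1, h2.trans h3⟩, Finset.mem_Icc.2 ⟨h1.trans h2, h3⟩⟩
  have hcard : A.card ≤ (n - 1) * (n - 1) := by
    refine (Finset.card_le_card hsubA).trans ?_
    rw [Finset.card_product]
    simp [Nat.card_Icc]
  have hcastc : ((n - 1 : ℕ) : ℝ) = (n : ℝ) - 1 := by
    have : 1 ≤ n := by omega
    push_cast [Nat.cast_sub this]
    ring
  have hcR : (A.card : ℝ) ≤ ((n : ℝ) - 1) ^ 2 := by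
    have h := (Nat.cast_le (α := ℝ)).2 hcard
    push_cast at h
    rw [hcastc] at h
    nlinarith [h]
  gcongr


def sq (p : ℕ × ℕ) : Set (ℝ × ℝ) := Set.Ico (p.1 : ℝ) (p.1 + 1) ×ˢ Set.Ico (p.2 : ℝ) (p.2 + 1)

lemma sq_meas (p : ℕ × ℕ) : MeasurableSet (sq p) := measurableSet_Ico.prod measurableSet_Ico

lemma sq_vol (p : ℕ × ℕ) : volume (sq p) = 1 := by
  rw [sq, Measure.volume_eq_prod, Measure.prod_prod, Real.volume_Ico, Real.volume_Ico]
  simp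

lemma mem_Ico_nat_eq {k l : ℕ} {x : ℝ} (hk : x ∈ Set.Ico (k : ℝ) (k + 1))
    (hl : x ∈ Set.Ico (l : ℝ) (l + 1)) : k = l := by
  by_contra h
  rcases Nat.lt_or_ge k l with hlt | hge
  · have : (k : ℝ) + 1 ≤ l := by exact_mod_cast hlt
    exact absurd (hk.2.trans_le (this.trans hl.1)) (lt_irrefl x)
  · rcases lt_or_eq_of_le hge with hlt | rfl
    · have : (l : ℝ) + 1 ≤ k := by exact_mod_cast hlt
      exact absurd (hl.2.trans_le (this.trans hk.1)) (lt_irrefl x)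
    · exact h rfl

lemma sq_disjoint {p q : ℕ × ℕ} (h : p ≠ q) : Disjoint (sq p) (sq q) := by
  rw [Set.disjoint_left]
  rintro ⟨x, y⟩ hp hq
  exact h (Prod.ext (mem_Ico_nat_eq hp.1 hq.1) (mem_Ico_nat_eq hp.2 hq.2))

lemma sq_integrable {p : ℕ × ℕ} (hp : 1 ≤ p.1) :
    IntegrableOn (fun q : ℝ × ℝ => 1 / q.1) (sq p) volume := by
  apply Measure.integrableOn_of_bounded (M := 1)
  · rw [sq_vol]; exact ENNReal.one_ne_top
  · simp only [one_div]
    exact (measurable_fst.inv).aestronglyMeasurable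
  · rw [ae_restrict_iff' (sq_meas p)]
    refine ae_of_all _ ?_
    rintro ⟨x, y⟩ hq
    have hx1 : (1 : ℝ) ≤ x := le_trans (by exact_mod_cast hp) hq.1.1
    have hx0 : (0 : ℝ) < x := lt_of_lt_of_le one_pos hx1
    rw [Real.norm_eq_abs, abs_of_nonneg (by positivity)]
    rw [div_le_one hx0]; exact hx1

lemma sq_integral_le {p : ℕ × ℕ} (hp : 1 ≤ p.1) :
    (∫ q in sq p, 1 / q.1 ∂(volume : Measure (ℝ × ℝ))) ≤ 1 / (p.1 : ℝ) := by
  have hp0 : (0 : ℝ) < p.1 := by exact_mod_cast hp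
  have hb : ∀ q ∈ sq p, ‖1 / (q : ℝ × ℝ).1‖ ≤ 1 / (p.1 : ℝ) := by
    rintro ⟨x, y⟩ hq
    have hx : (p.1 : ℝ) ≤ x := hq.1.1
    have hx0 : (0 : ℝ) < x := lt_of_lt_of_le hp0 hx
    rw [Real.norm_eq_abs, abs_of_nonneg (by positivity)]
    exact one_div_le_one_div_of_le hp0 hx
  have h := norm_setIntegral_le_of_norm_le_const (μ := volume) (s := sq p)
    (by rw [sq_vol]; exact ENNReal.one_lt_top) hb
  rw [measureReal_def, sq_vol] at h
  simp only [ENNReal.toReal_one, mul_one, Real.norm_eq_abs] at h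
  exact (le_abs_self _).trans h


lemma key {n : ℕ} (hn : 2 ≤ n) {r : ℝ} (hr : r ∈ discSet n) :
    r ≤ alphaCont n + 1 / ((n : ℝ) - 1) := by
  classical
  obtain ⟨A, hA, hsum, rfl⟩ := hr
  set B : Finset (ℕ × ℕ) := A ∪ A.image Prod.swap with hBdef
  have hB : ∀ p ∈ B, 1 ≤ p.1 ∧ p.1 ≤ n - 1 ∧ 1 ≤ p.2 ∧ p.2 ≤ n - 1 := by
    intro p hp
    rcases Finset.mem_union.1 hp with h | h
    · obtain ⟨h1, h2, h3⟩ := hA p h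
      exact ⟨h1, le_trans h2 h3, le_trans h1 h2, h3⟩
    · obtain ⟨q, hq, rfl⟩ := Finset.mem_image.1 h
      obtain ⟨h1, h2, h3⟩ := hA q hq
      exact ⟨le_trans h1 h2, h3, h1, le_trans h2 h3⟩
  have hswapB : ∀ p ∈ B, p.swap ∈ B := by
    intro p hp
    rcases Finset.mem_union.1 hp with h | h
    · exact Finset.mem_union.2 (Or.inr (Finset.mem_image.2 ⟨p, h, rfl⟩))
    · obtain ⟨q, hq, rfl⟩ := Finset.mem_image.1 h
      exact Finset.mem_union.2 (Or.inl (by simpa using hq))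
  have hinter : A ∩ A.image Prod.swap ⊆ (Finset.Icc 1 (n-1)).image (fun k => (k, k)) := by
    intro p hp
    obtain ⟨hpA, hpI⟩ := Finset.mem_inter.1 hp
    obtain ⟨h1, h2, h3⟩ := hA p hpA
    obtain ⟨q, hq, hqe⟩ := Finset.mem_image.1 hpI
    obtain ⟨g1, g2, g3⟩ := hA q hq
    have e1 : q.2 = p.1 := by rw [← hqe]; rfl
    have e2 : q.1 = p.2 := by rw [← hqe]; rfl
    have heq : p.1 = p.2 := le_antisymm h2 (by omega)
    refine Finset.mem_image.2 ⟨p.1, Finset.mem_Icc.2 ⟨h1, h2.trans h3⟩, ?_⟩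
    exact Prod.ext rfl heq
  have hintercard : (A ∩ A.image Prod.swap).card ≤ n - 1 :=
    le_trans (Finset.card_le_card hinter)
      (le_trans Finset.card_image_le (by simp [Nat.card_Icc]))
  have hcardeq : B.card + (A ∩ A.image Prod.swap).card = A.card + A.card := by
    rw [hBdef, Finset.card_union_add_card_inter,
      Finset.card_image_of_injective _ Prod.swap_injective]
  -- the continuous set
  set A' : Set (ℝ × ℝ) := ⋃ p ∈ B, sq p with hA'def
  have hmeas : MeasurableSet A' := B.measurableSet_biUnion (fun p _ => sq_meas p)
  have hpd : (↑B : Set (ℕ × ℕ)).PairwiseDisjoint sq := fun p _ q _ h => sq_disjoint h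
  have hvol : volume A' = B.card := by
    rw [hA'def, measure_biUnion_finset hpd (fun p _ => sq_meas p)]
    simp [sq_vol]
  have hsub : A' ⊆ Set.Icc (1:ℝ) n ×ˢ Set.Icc (1:ℝ) n := by
    rw [hA'def]
    refine Set.iUnion₂_subset ?_
    intro p hp
    obtain ⟨h1, h2, h3, h4⟩ := hB p hp
    rintro ⟨x, y⟩ hxy
    obtain ⟨hx, hy⟩ := hxy
    constructor
    · constructor
      · exact le_trans (by exact_mod_cast h1) hx.1
      · refine le_trans hx.2.le ?_
        have : p.1 + 1 ≤ n := by omega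
        exact_mod_cast this
    · constructor
      · exact le_trans (by exact_mod_cast h3) hy.1
      · refine le_trans hy.2.le ?_
        have : p.2 + 1 ≤ n := by omega
        exact_mod_cast this
  have hsymm : ∀ x y : ℝ, (x, y) ∈ A' ↔ (y, x) ∈ A' := by
    have key : ∀ x y : ℝ, (x, y) ∈ A' → (y, x) ∈ A' := by
      intro x y hxy
      rw [hA'def, Set.mem_iUnion₂] at hxy ⊢
      obtain ⟨p, hp, hmem⟩ := hxy
      exact ⟨p.swap, hswapB p hp, hmem.2, hmem.1⟩
    exact fun x y => ⟨key x y, key y x⟩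
  have hint : (∫ q in A', 1 / q.1 ∂(volume : Measure (ℝ × ℝ))) ≤ (n : ℝ) := by
    rw [hA'def, integral_biUnion_finset B (fun p _ => sq_meas p) hpd
      (fun p hp => sq_integrable (hB p hp).1)]
    have step1 : (∑ p ∈ B, ∫ q in sq p, 1 / q.1 ∂(volume : Measure (ℝ × ℝ)))
        ≤ ∑ p ∈ B, 1 / (p.1 : ℝ) :=
      Finset.sum_le_sum (fun p hp => sq_integral_le (hB p hp).1)
    refine le_trans step1 (le_trans ?_ hsum)
    have huni : (∑ p ∈ B, 1 / (p.1 : ℝ))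
        ≤ (∑ p ∈ A, 1 / (p.1 : ℝ)) + ∑ p ∈ A.image Prod.swap, 1 / (p.1 : ℝ) := by
      rw [hBdef]
      have := Finset.sum_union_inter (s₁ := A) (s₂ := A.image Prod.swap)
        (f := fun p => 1 / (p.1 : ℝ))
      have hpos : 0 ≤ ∑ p ∈ A ∩ A.image Prod.swap, 1 / (p.1 : ℝ) :=
        Finset.sum_nonneg (fun p _ => by positivity)
      linarith
    have himg : (∑ p ∈ A.image Prod.swap, 1 / (p.1 : ℝ)) = ∑ p ∈ A, 1 / (p.2 : ℝ) := by
      rw [Finset.sum_image (fun x _ y _ h => Prod.swap_injective h)]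
      rfl
    refine le_trans huni ?_
    rw [himg, ← Finset.sum_add_distrib]
    refine Finset.sum_le_sum ?_
    intro p hp
    obtain ⟨h1, h2, h3⟩ := hA p hp
    have hp1 : (0:ℝ) < p.1 := by exact_mod_cast h1
    have hp2 : (0:ℝ) < p.2 := by exact_mod_cast le_trans h1 h2
    rw [div_add_div _ _ (ne_of_gt hp1) (ne_of_gt hp2), one_mul, mul_one]
    exact le_of_eq (by ring)
  -- membership of the value
  have hmem : ((B.card : ℝ) / ((n : ℝ) - 1) ^ 2) ∈ contSet n := by
    refine ⟨A', hmeas.nullMeasurableSet, hsub, hsymm, hint, ?_⟩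
    rw [hvol]
    simp
  have hle : (B.card : ℝ) / ((n : ℝ) - 1) ^ 2 ≤ alphaCont n := by
    rw [alphaCont_eq]
    exact le_csSup (contSet_bddAbove hn) hmem
  -- numeric comparison
  set t : ℝ := (n : ℝ) with htdef
  have ht2 : (2 : ℝ) ≤ t := by rw [htdef]; exact_mod_cast hn
  have ht1 : (0 : ℝ) < t - 1 := by linarith
  have ht0 : (0 : ℝ) < t := by linarith
  have hC2 : ((n.choose 2 : ℕ) : ℝ) * 2 = t * (t - 1) := by
    have hnat : n.choose 2 * 2 = n * (n - 1) := by
      rw [Nat.choose_two_right, Nat.div_mul_cancel (Nat.even_mul_pred_self n).two_dvd]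
    have := congrArg (fun m : ℕ => (m : ℝ)) hnat
    push_cast [Nat.cast_sub (by omega : 1 ≤ n)] at this
    linarith [this]
  have hdle : ((A ∩ A.image Prod.swap).card : ℝ) ≤ t - 1 := by
    have h := (Nat.cast_le (α := ℝ)).2 hintercard
    rwa [Nat.cast_sub (by omega : 1 ≤ n), Nat.cast_one] at h
  have hbeq : (B.card : ℝ) + ((A ∩ A.image Prod.swap).card : ℝ) = 2 * (A.card : ℝ) := by
    have h := congrArg (fun m : ℕ => (m : ℝ)) hcardeq
    push_cast at h
    linarith [h]
  set a : ℝ := (A.card : ℝ) with hadef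
  set b : ℝ := (B.card : ℝ) with hbdef2
  have ha0 : 0 ≤ a := Nat.cast_nonneg _
  have hbge : 2 * a - (t - 1) ≤ b := by linarith
  have hCpos : (0 : ℝ) < ((n.choose 2 : ℕ) : ℝ) := by nlinarith
  have hne : t ≠ 0 := ne_of_gt ht0
  have hne1 : t - 1 ≠ 0 := ne_of_gt ht1
  have step1 : a / ((n.choose 2 : ℕ) : ℝ) = 2 * a / (t * (t - 1)) := by
    have hCval : ((n.choose 2 : ℕ) : ℝ) = t * (t - 1) / 2 := by linarith
    rw [hCval]
    field_simp
  have step2 : 2 * a / (t * (t - 1)) ≤ 2 * a / ((t - 1) ^ 2) := by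
    gcongr
    all_goals nlinarith
  have step3 : 2 * a / ((t - 1) ^ 2) ≤ b / ((t - 1) ^ 2) + 1 / (t - 1) := by
    have he : b / ((t - 1) ^ 2) + 1 / (t - 1) = (b + (t - 1)) / ((t - 1) ^ 2) := by
      field_simp
    rw [he]
    gcongr
    linarith
  calc a / ((n.choose 2 : ℕ) : ℝ) = 2 * a / (t * (t - 1)) := step1
    _ ≤ 2 * a / ((t - 1) ^ 2) := step2
    _ ≤ b / ((t - 1) ^ 2) + 1 / (t - 1) := step3
    _ ≤ alphaCont n + 1 / (t - 1) := by linarith [hle]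

end Stmt8Aux


theorem stmt8 :
    Filter.limsup (fun n : ℕ => alphaDisc n) Filter.atTop ≤
      Filter.limsup (fun n : ℕ => alphaCont n) Filter.atTop := by
  have hdisc : ∀ n : ℕ, 2 ≤ n → alphaDisc n ≤ alphaCont n + 1 / ((n : ℝ) - 1) := by
    intro n hn
    rw [Stmt8Aux.alphaDisc_eq]
    exact csSup_le ⟨0, Stmt8Aux.zero_mem_discSet n⟩ (fun r hr => Stmt8Aux.key hn hr)
  have hcb_disc : Filter.IsCoboundedUnder (· ≤ ·) Filter.atTop (fun n : ℕ => alphaDisc n) :=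
    Filter.isCoboundedUnder_le_of_eventually_le Filter.atTop (x := 0)
      (Filter.eventually_atTop.2 ⟨2, fun n hn => Stmt8Aux.alphaDisc_nonneg hn⟩)
  have hbd_cont : Filter.IsBoundedUnder (· ≤ ·) Filter.atTop (fun n : ℕ => alphaCont n) :=
    ⟨1, Filter.eventually_map.2
      (Filter.eventually_atTop.2 ⟨2, fun n hn => Stmt8Aux.alphaCont_le_one hn⟩)⟩
  have hcb_cont : Filter.IsCoboundedUnder (· ≤ ·) Filter.atTop (fun n : ℕ => alphaCont n) :=
    Filter.isCoboundedUnder_le_of_eventually_le Filter.atTop (x := 0)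
      (Filter.eventually_atTop.2 ⟨2, fun n hn => Stmt8Aux.alphaCont_nonneg hn⟩)
  have htend : Filter.Tendsto (fun n : ℕ => 1 / ((n : ℝ) - 1)) Filter.atTop (nhds 0) := by
    have h1 : Filter.Tendsto (fun n : ℕ => (n : ℝ) - 1) Filter.atTop Filter.atTop := by
      have := Filter.tendsto_atTop_add_const_right Filter.atTop (-1 : ℝ)
        tendsto_natCast_atTop_atTop
      simpa [sub_eq_add_neg] using this
    simpa [one_div, Pi.inv_def] using h1.inv_tendsto_atTop
  refine le_of_forall_pos_le_add ?_
  intro ε hε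
  have hev : ∀ᶠ n : ℕ in Filter.atTop, 1 / ((n : ℝ) - 1) ≤ ε :=
    htend.eventually (eventually_le_nhds hε)
  have hle : ∀ᶠ n : ℕ in Filter.atTop, alphaDisc n ≤ alphaCont n + ε := by
    filter_upwards [hev, Filter.eventually_ge_atTop 2] with n h1 h2
    exact (hdisc n h2).trans (by linarith)
  have hbd2 : Filter.IsBoundedUnder (· ≤ ·) Filter.atTop (fun n : ℕ => alphaCont n + ε) :=
    ⟨1 + ε, Filter.eventually_map.2
      (Filter.eventually_atTop.2 ⟨2, fun n hn => by
        have := Stmt8Aux.alphaCont_le_one hn; linarith⟩)⟩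
  have h1 := Filter.limsup_le_limsup hle hcb_disc hbd2
  have h2 := limsup_add_const Filter.atTop (fun n : ℕ => alphaCont n) ε
    hbd_cont hcb_cont
  rw [h2] at h1
  exact h1
end

section
/- Let n ≥ 1 be real and c > 0 with nc ≥ 2 and x₁(c) = n/(nc−1) ≥ 1. Then the double integral of 1/x over A_c with respect to two-dimensional Lebesgue measure equals (n − 2/c)·log(nc − 1); that is, ∬_{A_c} (1/x) dx dy = (n − 2/c)·log(nc − 1). -/
open MeasureTheory

/-- The sublevel set `A_c = {(x,y) ∈ [1,n]² : 1/x + 1/y ≤ c}`. -/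
def Ac (n c : ℝ) : Set (ℝ × ℝ) :=
  {p : ℝ × ℝ | p.1 ∈ Set.Icc 1 n ∧ p.2 ∈ Set.Icc 1 n ∧ 1 / p.1 + 1 / p.2 ≤ c}

theorem stmt11 (n c : ℝ) (hn : 1 ≤ n) (hc : 0 < c) (hnc : 2 ≤ n * c)
    (hx1 : 1 ≤ n / (n * c - 1)) :
    (∫ p in Ac n c, 1 / p.1 ∂(volume : Measure (ℝ × ℝ))) =
      (n - 2 / c) * Real.log (n * c - 1) := by
  have hn0 : (0:ℝ) < n := lt_of_lt_of_le one_pos hn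
  have hncpos : (0:ℝ) < n * c - 1 := by linarith
  set x₁ : ℝ := n / (n * c - 1) with hx₁def
  have hx1pos : 0 < x₁ := div_pos hn0 hncpos
  have hclt : n * c ≤ n + 1 := by
    have := (le_div_iff₀ hncpos).mp hx1
    linarith
  have hx1le : x₁ ≤ n := by
    rw [div_le_iff₀ hncpos]; nlinarith
  have hcx1 : c * x₁ - 1 = (n * c - 1)⁻¹ := by
    rw [hx₁def]; field_simp; rw [div_sub_one (by rw [mul_comm]; exact hncpos.ne')]; ring
  have hcx : ∀ x, x₁ ≤ x → 0 < c * x - 1 := by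
    intro x hx
    have h1 : c * x₁ ≤ c * x := mul_le_mul_of_nonneg_left hx hc.le
    have h2 : (0:ℝ) < (n * c - 1)⁻¹ := inv_pos.2 hncpos
    nlinarith
  -- the set as a region between graphs
  have hset : Ac n c =
      {p : ℝ × ℝ | p.1 ∈ Set.Icc x₁ n ∧ p.2 ∈ Set.Icc (p.1 / (c * p.1 - 1)) n} := by
    ext ⟨x, y⟩
    simp only [Ac, Set.mem_setOf_eq, Set.mem_Icc]
    constructor
    · rintro ⟨⟨hx1', hxn⟩, ⟨hy1, hyn⟩, hsum⟩
      have hx0 : (0:ℝ) < x := lt_of_lt_of_le one_pos hx1'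
      have hy0 : (0:ℝ) < y := lt_of_lt_of_le one_pos hy1
      have key : y + x ≤ c * (x * y) := by
        rw [div_add_div _ _ hx0.ne' hy0.ne', div_le_iff₀ (mul_pos hx0 hy0)] at hsum
        linarith
      have hcx' : 0 < c * x - 1 := by nlinarith
      have hyge : x / (c * x - 1) ≤ y := by
        rw [div_le_iff₀ hcx']; nlinarith
      have hxge : x₁ ≤ x := by
        rw [hx₁def, div_le_iff₀ hncpos]
        nlinarith [mul_le_mul_of_nonneg_right hyn hcx'.le]
      exact ⟨⟨hxge, hxn⟩, hyge, hyn⟩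
    · rintro ⟨⟨hxx1, hxn⟩, hya, hyn⟩
      have hx1' : 1 ≤ x := le_trans hx1 hxx1
      have hx0 : (0:ℝ) < x := lt_of_lt_of_le one_pos hx1'
      have hcx' : 0 < c * x - 1 := hcx x hxx1
      have hdge1 : 1 ≤ x / (c * x - 1) := by
        rw [le_div_iff₀ hcx']
        rcases le_total c 1 with h | h
        · nlinarith
        · nlinarith [mul_le_mul_of_nonneg_right hxn (sub_nonneg.2 h)]
      have hy1 : 1 ≤ y := le_trans hdge1 hya
      have hy0 : (0:ℝ) < y := lt_of_lt_of_le one_pos hy1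
      have hxy : x ≤ y * (c * x - 1) := by
        have := (div_le_iff₀ hcx').mp hya; linarith
      have hsum : 1 / x + 1 / y ≤ c := by
        have h2 : 1 / y ≤ (c * x - 1) / x := by
          rw [div_le_div_iff₀ hy0 hx0]; nlinarith
        have h3 : 1 / x + (c * x - 1) / x = c := by field_simp; ring
        linarith
      exact ⟨⟨hx1', hxn⟩, ⟨hy1, hyn⟩, hsum⟩
  have hA : MeasurableSet (Ac n c) := by
    have h1 : Measurable fun p : ℝ × ℝ => 1 / p.1 + 1 / p.2 :=
      (measurable_const.div measurable_fst).add (measurable_const.div measurable_snd)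
    exact (measurable_fst measurableSet_Icc).inter
      ((measurable_snd measurableSet_Icc).inter (measurableSet_le h1 measurable_const))
  -- integrability
  have hsub : Ac n c ⊆ Set.Icc 1 n ×ˢ Set.Icc 1 n := fun p hp => ⟨hp.1, hp.2.1⟩
  have hIntOn : IntegrableOn (fun p : ℝ × ℝ => 1 / p.1) (Ac n c) volume := by
    apply Measure.integrableOn_of_bounded (M := 1)
    · exact ne_of_lt (lt_of_le_of_lt (measure_mono hsub)
        (isCompact_Icc.prod isCompact_Icc).measure_lt_top)
    · exact (measurable_const.div measurable_fst).aestronglyMeasurable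
    · refine (ae_restrict_mem hA).mono fun p hp => ?_
      have hx : (1:ℝ) ≤ p.1 := hp.1.1
      have hx0 : (0:ℝ) < p.1 := lt_of_lt_of_le one_pos hx
      rw [Real.norm_eq_abs, abs_of_nonneg (by positivity)]
      rw [div_le_one hx0]; exact hx
  have hInd : Integrable ((Ac n c).indicator fun p : ℝ × ℝ => 1 / p.1) volume :=
    (integrable_indicator_iff hA).2 hIntOn
  -- Fubini
  have step1 : (∫ p in Ac n c, 1 / p.1 ∂(volume : Measure (ℝ × ℝ)))
      = ∫ x : ℝ, ∫ y : ℝ, (Ac n c).indicator (fun p : ℝ × ℝ => 1 / p.1) (x, y) := by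
    rw [← integral_indicator hA]
    rw [Measure.volume_eq_prod] at hInd ⊢
    exact MeasureTheory.integral_prod _ hInd
  -- inner integral
  have hslice : ∀ x : ℝ,
      (∫ y : ℝ, (Ac n c).indicator (fun p : ℝ × ℝ => 1 / p.1) (x, y))
      = (Set.Icc x₁ n).indicator (fun x => (n - x / (c * x - 1)) * (1 / x)) x := by
    intro x
    by_cases hx : x ∈ Set.Icc x₁ n
    · have hcx' : 0 < c * x - 1 := hcx x hx.1
      have hx0 : (0:ℝ) < x := lt_of_lt_of_le hx1pos hx.1
      have hxe : ∀ y : ℝ, (Ac n c).indicator (fun p : ℝ × ℝ => 1 / p.1) (x, y)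
          = (Set.Icc (x / (c * x - 1)) n).indicator (fun _ => 1 / x) y := by
        intro y
        rw [hset]
        by_cases hy : y ∈ Set.Icc (x / (c * x - 1)) n
        · rw [Set.indicator_of_mem hy, Set.indicator_of_mem (by exact ⟨hx, hy⟩)]
        · rw [Set.indicator_of_notMem hy, Set.indicator_of_notMem (fun h => hy h.2)]
      have hle : x / (c * x - 1) ≤ n := by
        rw [div_le_iff₀ hcx']
        have := (div_le_iff₀ hncpos).mp hx.1
        nlinarith
      simp_rw [hxe]
      rw [MeasureTheory.integral_indicator_const _ measurableSet_Icc, Real.volume_real_Icc_of_le hle,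
        Set.indicator_of_mem hx, smul_eq_mul]
    · have hxe : ∀ y : ℝ, (Ac n c).indicator (fun p : ℝ × ℝ => 1 / p.1) (x, y) = 0 := by
        intro y
        apply Set.indicator_of_notMem
        rw [hset]
        exact fun h => hx h.1
      simp_rw [hxe]
      rw [Set.indicator_of_notMem hx, integral_zero]
  -- reduce to interval integral
  have step2 : (∫ x : ℝ, ∫ y : ℝ, (Ac n c).indicator (fun p : ℝ × ℝ => 1 / p.1) (x, y))
      = ∫ x in x₁..n, (n - x / (c * x - 1)) * (1 / x) := by
    simp_rw [hslice]
    rw [integral_indicator measurableSet_Icc, MeasureTheory.integral_Icc_eq_integral_Ioc,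
      ← intervalIntegral.integral_of_le hx1le]
  -- rewrite integrand
  have step3 : (∫ x in x₁..n, (n - x / (c * x - 1)) * (1 / x))
      = ∫ x in x₁..n, (n / x - 1 / (c * x - 1)) := by
    apply intervalIntegral.integral_congr
    intro x hx
    rw [Set.uIcc_of_le hx1le] at hx
    have hcx' : 0 < c * x - 1 := hcx x hx.1
    have hx0 : (0:ℝ) < x := lt_of_lt_of_le hx1pos hx.1
    show (n - x / (c * x - 1)) * (1 / x) = n / x - 1 / (c * x - 1)
    rw [sub_mul, mul_one_div, mul_one_div, div_div, mul_comm (c * x - 1) x, ← div_div,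
      div_self hx0.ne']
  -- FTC
  have hderiv : ∀ x ∈ Set.uIcc x₁ n,
      HasDerivAt (fun x => n * Real.log x - c⁻¹ * Real.log (c * x - 1))
        (n / x - 1 / (c * x - 1)) x := by
    intro x hx
    rw [Set.uIcc_of_le hx1le] at hx
    have hcx' : 0 < c * x - 1 := hcx x hx.1
    have hx0 : (0:ℝ) < x := lt_of_lt_of_le hx1pos hx.1
    have h1 : HasDerivAt (fun x : ℝ => n * Real.log x) (n * x⁻¹) x :=
      (Real.hasDerivAt_log hx0.ne').const_mul n
    have h2 : HasDerivAt (fun x : ℝ => c * x - 1) c x := by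
      simpa using ((hasDerivAt_id x).const_mul c).sub_const 1
    have h3 : HasDerivAt (fun x : ℝ => Real.log (c * x - 1)) (c / (c * x - 1)) x :=
      h2.log hcx'.ne'
    have h4 : HasDerivAt (fun x => n * Real.log x - c⁻¹ * Real.log (c * x - 1))
        (n * x⁻¹ - c⁻¹ * (c / (c * x - 1))) x := h1.sub (h3.const_mul c⁻¹)
    convert h4 using 1
    show n / x - 1 / (c * x - 1) = n * x⁻¹ - c⁻¹ * (c / (c * x - 1))
    field_simp
  have hcont : IntervalIntegrable (fun x => n / x - 1 / (c * x - 1)) volume x₁ n := by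
    apply ContinuousOn.intervalIntegrable
    rw [Set.uIcc_of_le hx1le]
    have h1 : ∀ x ∈ Set.Icc x₁ n, x ≠ 0 :=
      fun x hx => (lt_of_lt_of_le hx1pos hx.1).ne'
    have h2 : ∀ x ∈ Set.Icc x₁ n, c * x - 1 ≠ 0 := fun x hx => (hcx x hx.1).ne'
    exact (continuousOn_const.div continuousOn_id h1).sub
      (continuousOn_const.div
        ((continuous_const.mul continuous_id).continuousOn.sub continuousOn_const) h2)
  have step4 : (∫ x in x₁..n, (n / x - 1 / (c * x - 1)))
      = (n * Real.log n - c⁻¹ * Real.log (c * n - 1))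
        - (n * Real.log x₁ - c⁻¹ * Real.log (c * x₁ - 1)) :=
    intervalIntegral.integral_eq_sub_of_hasDerivAt hderiv hcont
  have hlogx1 : Real.log x₁ = Real.log n - Real.log (n * c - 1) :=
    Real.log_div hn0.ne' hncpos.ne'
  have hlogc : Real.log (c * x₁ - 1) = -Real.log (n * c - 1) := by
    rw [hcx1, Real.log_inv]
  rw [step1, step2, step3, step4, hlogx1, hlogc, show c * n = n * c from mul_comm c n]
  field_simp
  ring
end

section
/- Let n ≥ 1 be real and c > 0 with nc ≥ 2 and x₁(c) = n/(nc−1) ≥ 1. Then the two-dimensional Lebesgue measure of A_c equals n²·(nc − 2)/(nc) − (2/c²)·log(nc − 1). -/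
open MeasureTheory

theorem stmt14 (n c : ℝ) (hn : 1 ≤ n) (hc : 0 < c) (hnc : 2 ≤ n * c)
    (hx1 : 1 ≤ n / (n * c - 1)) :
    ((volume : Measure (ℝ × ℝ)) (Ac n c)).toReal =
      n ^ 2 * (n * c - 2) / (n * c) - (2 / c ^ 2) * Real.log (n * c - 1) := by
  have hn0 : (0:ℝ) < n := lt_of_lt_of_le one_pos hn
  set d : ℝ := n * c - 1 with hd
  have hd1 : (1:ℝ) ≤ d := by simp only [hd]; linarith
  have hd0 : (0:ℝ) < d := lt_of_lt_of_le one_pos hd1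
  have hdn : d ≤ n := by
    have := (le_div_iff₀ hd0).mp hx1
    linarith
  set x₁ : ℝ := n / d with hx₁def
  have hx₁1 : 1 ≤ x₁ := hx1
  have hx₁n : x₁ ≤ n := by
    calc x₁ = n / d := rfl
    _ ≤ n / 1 := by apply div_le_div_of_nonneg_left hn0.le one_pos hd1
    _ = n := div_one n
  set g : ℝ → ℝ := fun x => x / (c * x - 1) with hgdef
  -- positivity of denominator on [x₁, n]
  have hcx1 : c * x₁ - 1 = 1 / d := by
    have hcx : c * x₁ = n * c / d := by rw [hx₁def]; ring
    rw [hcx, eq_div_iff hd0.ne', sub_mul, div_mul_cancel₀ _ hd0.ne', hd]; ring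
  have hpos : ∀ x ∈ Set.Icc x₁ n, 0 < c * x - 1 := by
    intro x hx
    have h1 : c * x₁ ≤ c * x := mul_le_mul_of_nonneg_left hx.1 hc.le
    have h2 : (0:ℝ) < 1 / d := by positivity
    linarith
  -- g x ≤ n on [x₁, n]
  have hgle : ∀ x ∈ Set.Icc x₁ n, g x ≤ n := by
    intro x hx
    rw [hgdef]
    rw [div_le_iff₀ (hpos x hx)]
    have hxd : n ≤ x * d := by
      have := (div_le_iff₀ hd0).mp hx.1
      linarith
    nlinarith [hxd]
  -- 1 ≤ g x on [x₁, n]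
  have hg1 : ∀ x ∈ Set.Icc x₁ n, 1 ≤ g x := by
    intro x hx
    have hx1' : (1:ℝ) ≤ x := le_trans hx₁1 hx.1
    rw [hgdef, le_div_iff₀ (hpos x hx)]
    rcases le_or_gt c 1 with h | h
    · nlinarith
    · nlinarith [mul_nonneg (sub_nonneg.mpr hx.2) (sub_nonneg.mpr h.le)]
  -- set equality
  have hset : Ac n c = {p : ℝ × ℝ | p.1 ∈ Set.Icc x₁ n ∧ p.2 ∈ Set.Icc (g p.1) n} := by
    ext ⟨x, y⟩
    simp only [Ac, Set.mem_setOf_eq, Set.mem_Icc]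
    constructor
    · rintro ⟨⟨hx1', hxn⟩, ⟨hy1, hyn⟩, hsum⟩
      have hx0 : (0:ℝ) < x := lt_of_lt_of_le one_pos hx1'
      have hy0 : (0:ℝ) < y := lt_of_lt_of_le one_pos hy1
      have hyinv : 1 / n ≤ 1 / y := one_div_le_one_div_of_le hy0 hyn
      have hxi : 1 / x ≤ d / n := by
        have : 1 / x ≤ c - 1 / n := by linarith
        have h2 : c - 1 / n = d / n := by field_simp; ring
        linarith [h2 ▸ this]
      have hxx₁ : x₁ ≤ x := by
        rw [hx₁def, div_le_iff₀ hd0]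
        rw [div_le_div_iff₀ hx0 hn0] at hxi
        linarith
      have hxmem : x ∈ Set.Icc x₁ n := ⟨hxx₁, hxn⟩
      refine ⟨⟨hxx₁, hxn⟩, ?_, hyn⟩
      rw [hgdef, div_le_iff₀ (hpos x hxmem)]
      have hyi : 1 / y ≤ (c * x - 1) / x := by
        have : 1 / y ≤ c - 1 / x := by linarith
        have h2 : c - 1 / x = (c * x - 1) / x := by field_simp
        linarith [h2 ▸ this]
      rw [div_le_div_iff₀ hy0 hx0] at hyi
      nlinarith
    · rintro ⟨⟨hxx₁, hxn⟩, hgy, hyn⟩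
      have hxmem : x ∈ Set.Icc x₁ n := ⟨hxx₁, hxn⟩
      have hx1' : (1:ℝ) ≤ x := le_trans hx₁1 hxx₁
      have hy1 : (1:ℝ) ≤ y := le_trans (hg1 x hxmem) hgy
      have hx0 : (0:ℝ) < x := lt_of_lt_of_le one_pos hx1'
      have hy0 : (0:ℝ) < y := lt_of_lt_of_le one_pos hy1
      refine ⟨⟨hx1', hxn⟩, ⟨hy1, hyn⟩, ?_⟩
      have hxy : x ≤ y * (c * x - 1) := by
        rw [hgdef, div_le_iff₀ (hpos x hxmem)] at hgy
        linarith
      have h1y : 1 / y ≤ (c * x - 1) / x := by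
        rw [div_le_div_iff₀ hy0 hx0]
        linarith
      have hce : 1 / x + (c * x - 1) / x = c := by field_simp; ring
      linarith
  -- measurability
  have hgm : Measurable g := by
    apply Measurable.div measurable_id
    exact (measurable_id.const_mul c).sub_const 1
  have hSmeas : MeasurableSet {p : ℝ × ℝ | p.1 ∈ Set.Icc x₁ n ∧ p.2 ∈ Set.Icc (g p.1) n} :=
    measurableSet_region_between_cc hgm measurable_const measurableSet_Icc
  -- continuity of n - g on the interval
  have hcont : ContinuousOn (fun x => n - g x) (Set.Icc x₁ n) := by
    apply continuousOn_const.sub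
    apply ContinuousOn.div continuousOn_id
    · exact ((continuous_const.mul continuous_id).sub continuous_const).continuousOn
    · intro x hx; exact ne_of_gt (hpos x hx)
  -- Fubini
  have hvol : (volume : Measure (ℝ × ℝ)) (Ac n c)
      = ∫⁻ x in Set.Icc x₁ n, ENNReal.ofReal (n - g x) := by
    rw [hset, MeasureTheory.Measure.volume_eq_prod, Measure.prod_apply hSmeas]
    have h : (fun x => volume (Prod.mk x ⁻¹' {p : ℝ × ℝ | p.1 ∈ Set.Icc x₁ n ∧ p.2 ∈ Set.Icc (g p.1) n}))
        = (Set.Icc x₁ n).indicator fun x => ENNReal.ofReal (n - g x) := by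
      funext x
      rw [Set.indicator_apply]
      split_ifs with h
      · have hx : Prod.mk x ⁻¹' {p : ℝ × ℝ | p.1 ∈ Set.Icc x₁ n ∧ p.2 ∈ Set.Icc (g p.1) n}
            = Set.Icc (g x) n := by
          ext y
          simp only [Set.mem_preimage, Set.mem_setOf_eq]
          exact ⟨fun hh => hh.2, fun hy => ⟨h, hy⟩⟩
        rw [hx, Real.volume_Icc]
      · have hx : Prod.mk x ⁻¹' {p : ℝ × ℝ | p.1 ∈ Set.Icc x₁ n ∧ p.2 ∈ Set.Icc (g p.1) n}
            = ∅ :=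
          Set.eq_empty_iff_forall_notMem.mpr fun y hy => h hy.1
        rw [hx, measure_empty]
    rw [h]
    exact lintegral_indicator measurableSet_Icc _
  -- convert to Bochner integral
  have hint : IntegrableOn (fun x => n - g x) (Set.Icc x₁ n) volume :=
    hcont.integrableOn_Icc
  have hnonneg : ∀ x ∈ Set.Icc x₁ n, 0 ≤ n - g x := fun x hx => by
    linarith [hgle x hx]
  have hlint : ∫⁻ x in Set.Icc x₁ n, ENNReal.ofReal (n - g x)
      = ENNReal.ofReal (∫ x in Set.Icc x₁ n, (n - g x)) := by
    rw [MeasureTheory.ofReal_integral_eq_lintegral_ofReal hint]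
    exact (ae_restrict_iff' measurableSet_Icc).mpr (Filter.Eventually.of_forall hnonneg)
  have hintnonneg : 0 ≤ ∫ x in Set.Icc x₁ n, (n - g x) :=
    setIntegral_nonneg measurableSet_Icc hnonneg
  rw [hvol, hlint, ENNReal.toReal_ofReal hintnonneg]
  -- interval integral
  rw [MeasureTheory.integral_Icc_eq_integral_Ioc, ← intervalIntegral.integral_of_le hx₁n]
  -- FTC
  have hcne : c ≠ 0 := ne_of_gt hc
  have hFTC : ∫ x in x₁..n, (n - g x)
      = (n * n - n / c - 1 / c ^ 2 * Real.log (c * n - 1))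
        - (n * x₁ - x₁ / c - 1 / c ^ 2 * Real.log (c * x₁ - 1)) := by
    have huIcc : Set.uIcc x₁ n = Set.Icc x₁ n := Set.uIcc_of_le hx₁n
    apply intervalIntegral.integral_eq_sub_of_hasDerivAt
      (f := fun x => n * x - x / c - 1 / c ^ 2 * Real.log (c * x - 1))
    · intro x hx
      rw [huIcc] at hx
      have hne : c * x - 1 ≠ 0 := ne_of_gt (hpos x hx)
      have h1 : HasDerivAt (fun y : ℝ => n * y) n x := by
        simpa using (hasDerivAt_id x).const_mul n
      have h2 : HasDerivAt (fun y : ℝ => y / c) (1 / c) x := by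
        simpa using (hasDerivAt_id x).div_const c
      have h3 : HasDerivAt (fun y : ℝ => c * y - 1) c x := by
        simpa using ((hasDerivAt_id x).const_mul c).sub_const 1
      have h4 : HasDerivAt (fun y : ℝ => Real.log (c * y - 1)) (c / (c * x - 1)) x :=
        h3.log hne
      have h5 := (h1.sub h2).sub (h4.const_mul (1 / c ^ 2))
      convert h5 using 1
      · rfl
      rw [hgdef]
      field_simp
      field_simp [hne]
      ring
    · rw [intervalIntegrable_iff_integrableOn_Icc_of_le hx₁n]
      exact hint
  rw [hFTC]
  -- final algebra
  have hlog1 : Real.log (c * x₁ - 1) = - Real.log d := by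
    rw [hcx1, one_div, Real.log_inv]
  have hlog2 : c * n - 1 = d := by rw [hd]; ring
  rw [hlog1, hlog2, hx₁def]
  have hne : d ≠ 0 := ne_of_gt hd0
  have hnn : n ≠ 0 := ne_of_gt hn0
  have hncne : n * c ≠ 0 := by positivity
  have hd' : n * c - 2 = d - 1 := by rw [hd]; ring
  have hd'' : n * c = d + 1 := by rw [hd]; ring
  rw [hd', hd'']
  have hdc : d + 1 = n * c := by rw [hd]; ring
  field_simp
  ring_nf
  rw [hd]; ring
end

section
/- Let G be a finite simple graph on n vertices, let m be the number of distinct vertex degrees of G (the number of i ∈ {1,…,n−1} with n_i > 0, where n_i is the number of vertices of degree i; G has no isolated vertices), and for 1 ≤ i ≤ n−1 let D_i = ∑_{k=1}^{i} χ_{ki} + ∑_{k=i+1}^{n−1} χ_{ik}, where χ_{ik} = 1 if j_{ik}(G) > 0 and χ_{ik} = 0 otherwise. Call a degree i single if n_i = 1 and multiple if n_i ≥ 2. Then ∑_{i=1}^{n−1} D_i ≤ ∑_{i single} min(m, i) + √m · √(∑_{i multiple} min(m,i)) · √(∑_{i multiple} n_i). -/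
/-- The number of distinct vertex degrees of `G` (among `1, …, n-1`). -/
noncomputable def numDeg {n : ℕ} (G : SimpleGraph (Fin n)) : ℕ :=
  ((Finset.Icc 1 (n - 1)).filter (fun i => 0 < degCount G i)).card

/-- `Dvec G i = ∑_{k=1}^{i} χ_{ki} + ∑_{k=i+1}^{n-1} χ_{ik}`, where `χ_{ik} = 1` iff
`j_{ik}(G) > 0`. -/
noncomputable def Dvec {n : ℕ} (G : SimpleGraph (Fin n)) (i : ℕ) : ℕ :=
  ((Finset.Icc 1 i).filter (fun k => 0 < jdv G k i)).card +
    ((Finset.Icc (i + 1) (n - 1)).filter (fun k => 0 < jdv G i k)).card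

lemma jdv_witness {n : ℕ} (G : SimpleGraph (Fin n)) (a b : ℕ) (h : 0 < jdv G a b) :
    ∃ v w, G.Adj v w ∧ gdeg G v = a ∧ gdeg G w = b := by
  have hne : {e ∈ G.edgeSet | Sym2.map (gdeg G) e = s(a, b)}.Nonempty := by
    apply Set.nonempty_of_ncard_ne_zero
    unfold jdv at h
    omega
  obtain ⟨e, he, hmap⟩ := hne
  induction e using Sym2.ind with
  | _ v w =>
    rw [SimpleGraph.mem_edgeSet] at he
    rw [Sym2.map_pair_eq, Sym2.eq_iff] at hmap
    rcases hmap with ⟨h1, h2⟩ | ⟨h1, h2⟩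
    · exact ⟨v, w, he, h1, h2⟩
    · exact ⟨w, v, he.symm, h2, h1⟩

lemma gdeg_eq {n : ℕ} (G : SimpleGraph (Fin n)) [DecidableRel G.Adj] (v : Fin n) :
    gdeg G v = G.degree v := by
  unfold gdeg
  congr!

lemma degCount_eq {n : ℕ} (G : SimpleGraph (Fin n)) (i : ℕ) :
    degCount G i = (Finset.univ.filter (fun v => gdeg G v = i)).card := by
  unfold degCount
  rw [show {v : Fin n | gdeg G v = i} = ↑(Finset.univ.filter (fun v => gdeg G v = i)) by
    ext v; simp, Set.ncard_coe_finset]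

lemma degCount_pos {n : ℕ} (G : SimpleGraph (Fin n)) {i : ℕ} {v : Fin n}
    (h : gdeg G v = i) : 0 < degCount G i := by
  rw [degCount_eq]
  exact Finset.card_pos.mpr ⟨v, by simp [h]⟩

-- D_i as card of a union
lemma Dvec_eq_card_union {n : ℕ} (G : SimpleGraph (Fin n)) (i : ℕ) :
    Dvec G i = (((Finset.Icc 1 i).filter (fun k => 0 < jdv G k i)) ∪
      ((Finset.Icc (i + 1) (n - 1)).filter (fun k => 0 < jdv G i k))).card := by
  unfold Dvec
  rw [Finset.card_union_of_disjoint]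
  apply Finset.disjoint_filter_filter
  rw [Finset.disjoint_left]
  intro k hk1 hk2
  simp only [Finset.mem_Icc] at hk1 hk2
  omega

lemma union_mem_witness {n : ℕ} (G : SimpleGraph (Fin n)) {i k : ℕ}
    (hk : k ∈ ((Finset.Icc 1 i).filter (fun k => 0 < jdv G k i)) ∪
      ((Finset.Icc (i + 1) (n - 1)).filter (fun k => 0 < jdv G i k))) :
    ∃ v w, gdeg G v = i ∧ G.Adj v w ∧ gdeg G w = k := by
  rw [Finset.mem_union, Finset.mem_filter, Finset.mem_filter] at hk
  rcases hk with ⟨_, h⟩ | ⟨_, h⟩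
  · obtain ⟨v, w, hadj, hv, hw⟩ := jdv_witness G k i h
    exact ⟨w, v, hw, hadj.symm, hv⟩
  · obtain ⟨v, w, hadj, hv, hw⟩ := jdv_witness G i k h
    exact ⟨v, w, hv, hadj, hw⟩

lemma Dvec_le_numDeg {n : ℕ} (G : SimpleGraph (Fin n)) {i : ℕ} (hi : i ∈ Finset.Icc 1 (n-1)) :
    Dvec G i ≤ numDeg G := by
  rw [Dvec_eq_card_union]
  apply Finset.card_le_card
  intro k hk
  have hmem := hk
  rw [Finset.mem_union, Finset.mem_filter, Finset.mem_filter] at hmem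
  obtain ⟨v, w, hv, hadj, hw⟩ := union_mem_witness G hk
  rw [Finset.mem_filter]
  refine ⟨?_, degCount_pos G hw⟩
  rw [Finset.mem_Icc] at hi ⊢
  rcases hmem with ⟨h1, _⟩ | ⟨h1, _⟩ <;> rw [Finset.mem_Icc] at h1 <;> omega

lemma Dvec_le_mul {n : ℕ} (G : SimpleGraph (Fin n)) (i : ℕ) :
    Dvec G i ≤ degCount G i * i := by
  classical
  rw [Dvec_eq_card_union]
  set U := ((Finset.Icc 1 i).filter (fun k => 0 < jdv G k i)) ∪
      ((Finset.Icc (i + 1) (n - 1)).filter (fun k => 0 < jdv G i k)) with hU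
  rcases U.eq_empty_or_nonempty with he | ⟨k0, hk0⟩
  · simp [he]
  obtain ⟨v0, -, -, -⟩ := union_mem_witness G hk0
  haveI : Inhabited (Fin n) := ⟨v0⟩
  have hch : ∀ k : ℕ, ∃ w : Fin n, k ∈ U → (gdeg G w = k ∧ ∃ v, gdeg G v = i ∧ G.Adj v w) := by
    intro k
    by_cases hk : k ∈ U
    · obtain ⟨v, w, hv, hadj, hw⟩ := union_mem_witness G hk
      exact ⟨w, fun _ => ⟨hw, v, hv, hadj⟩⟩
    · exact ⟨default, fun h => absurd h hk⟩
  choose f hf using hch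
  set N := Finset.univ.filter (fun w : Fin n => ∃ v, gdeg G v = i ∧ G.Adj v w) with hN
  have h1 : U.card ≤ N.card := by
    apply Finset.card_le_card_of_injOn f
    · intro k hk
      simp only [hN, Finset.mem_coe, Finset.mem_filter, Finset.mem_univ, true_and]
      exact (hf k hk).2
    · intro a ha b hb hab
      have : gdeg G (f a) = gdeg G (f b) := by rw [hab]
      rw [(hf a ha).1, (hf b hb).1] at this
      exact this
  refine h1.trans ?_
  have h2 : N ⊆ (Finset.univ.filter (fun v => gdeg G v = i)).biUnion
      (fun v => G.neighborFinset v) := by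
    intro w hw
    simp only [hN, Finset.mem_filter, Finset.mem_univ, true_and] at hw
    obtain ⟨v, hv, hadj⟩ := hw
    rw [Finset.mem_biUnion]
    exact ⟨v, by simp [hv], by rwa [SimpleGraph.mem_neighborFinset]⟩
  refine (Finset.card_le_card h2).trans ?_
  refine (Finset.card_biUnion_le).trans ?_
  rw [degCount_eq]
  refine le_of_eq (Finset.sum_const_nat fun v hv => ?_)
  rw [Finset.mem_filter] at hv
  rw [SimpleGraph.card_neighborFinset_eq_degree, ← gdeg_eq, hv.2]

lemma Dvec_eq_zero {n : ℕ} (G : SimpleGraph (Fin n)) {i : ℕ} (h : degCount G i = 0) :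
    Dvec G i = 0 := by
  rw [Dvec_eq_card_union]
  rw [Finset.card_eq_zero, Finset.eq_empty_iff_forall_notMem]
  intro k hk
  obtain ⟨v, w, hv, -, -⟩ := union_mem_witness G hk
  have := degCount_pos G hv
  omega

theorem stmt16 (n : ℕ) (G : SimpleGraph (Fin n)) (hG : ∀ v, gdeg G v ≠ 0) :
    (∑ i ∈ Finset.Icc 1 (n - 1), (Dvec G i : ℝ)) ≤
      (∑ i ∈ (Finset.Icc 1 (n - 1)).filter (fun i => degCount G i = 1),
          ((min (numDeg G) i : ℕ) : ℝ)) +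
      Real.sqrt (numDeg G) *
        Real.sqrt (∑ i ∈ (Finset.Icc 1 (n - 1)).filter (fun i => 2 ≤ degCount G i),
          ((min (numDeg G) i : ℕ) : ℝ)) *
        Real.sqrt (∑ i ∈ (Finset.Icc 1 (n - 1)).filter (fun i => 2 ≤ degCount G i),
          (degCount G i : ℝ)) := by
  classical
  set S := Finset.Icc 1 (n - 1) with hS
  set m := numDeg G with hm
  set S1 := S.filter (fun i => degCount G i = 1) with hS1
  set S2 := S.filter (fun i => 2 ≤ degCount G i) with hS2
  -- split the sum
  have hsplit : (∑ i ∈ S, (Dvec G i : ℝ)) =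
      (∑ i ∈ S1, (Dvec G i : ℝ)) + (∑ i ∈ S2, (Dvec G i : ℝ)) := by
    rw [← Finset.sum_filter_add_sum_filter_not S (fun i => degCount G i = 1)]
    congr 1
    rw [hS2]
    refine (Finset.sum_subset ?_ ?_).symm
    · intro i hi
      rw [Finset.mem_filter] at hi ⊢
      obtain ⟨h1, h2⟩ := hi
      exact ⟨h1, by omega⟩
    · intro i hi hni
      rw [Finset.mem_filter] at hi hni
      have h0 : degCount G i = 0 := by
        by_contra hc
        exact hni ⟨hi.1, by omega⟩
      rw [Dvec_eq_zero G h0]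
      norm_num
  rw [hsplit]
  have hpart1 : (∑ i ∈ S1, (Dvec G i : ℝ)) ≤ ∑ i ∈ S1, ((min m i : ℕ) : ℝ) := by
    apply Finset.sum_le_sum
    intro i hi
    rw [Finset.mem_filter] at hi
    have h1 := Dvec_le_numDeg G hi.1
    have h2 := Dvec_le_mul G i
    rw [hi.2, one_mul] at h2
    exact_mod_cast le_min h1 h2
  have hpart2 : (∑ i ∈ S2, (Dvec G i : ℝ)) ≤
      Real.sqrt m * (Real.sqrt (∑ i ∈ S2, ((min m i : ℕ) : ℝ)) *
        Real.sqrt (∑ i ∈ S2, (degCount G i : ℝ))) := by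
    have step1 : (∑ i ∈ S2, (Dvec G i : ℝ)) ≤
        ∑ i ∈ S2, Real.sqrt m * (Real.sqrt (min m i : ℕ) * Real.sqrt (degCount G i)) := by
      apply Finset.sum_le_sum
      intro i hi
      rw [Finset.mem_filter] at hi
      have h1 := Dvec_le_numDeg G hi.1
      have h2 := Dvec_le_mul G i
      have hni : 1 ≤ degCount G i := le_trans one_le_two hi.2
      have hsq : (Dvec G i) ^ 2 ≤ m * (min m i * degCount G i) := by
        rcases le_total m i with h | h
        · rw [min_eq_left h]
          calc (Dvec G i) ^ 2 = Dvec G i * Dvec G i := sq (Dvec G i) ▸ by ring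
            _ ≤ m * (m * 1) := by rw [mul_one]; exact Nat.mul_le_mul h1 h1
            _ ≤ m * (m * degCount G i) := by
                exact Nat.mul_le_mul_left _ (Nat.mul_le_mul_left _ hni)
        · rw [min_eq_right h]
          calc (Dvec G i) ^ 2 = Dvec G i * Dvec G i := sq (Dvec G i) ▸ by ring
            _ ≤ m * (degCount G i * i) := Nat.mul_le_mul h1 h2
            _ = m * (i * degCount G i) := by ring
      have hsqR : ((Dvec G i : ℝ)) ^ 2 ≤ (m : ℝ) * ((min m i : ℕ) * (degCount G i : ℝ)) := by
        exact_mod_cast hsq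
      calc (Dvec G i : ℝ) = Real.sqrt ((Dvec G i : ℝ) ^ 2) := by
            rw [Real.sqrt_sq (by positivity)]
        _ ≤ Real.sqrt ((m : ℝ) * ((min m i : ℕ) * (degCount G i : ℝ))) :=
            Real.sqrt_le_sqrt hsqR
        _ = Real.sqrt m * (Real.sqrt (min m i : ℕ) * Real.sqrt (degCount G i)) := by
            rw [Real.sqrt_mul (by positivity), Real.sqrt_mul (by positivity)]
    refine step1.trans ?_
    rw [← Finset.mul_sum]
    apply mul_le_mul_of_nonneg_left _ (Real.sqrt_nonneg _)
    -- Cauchy-Schwarz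
    have cs := Finset.sum_mul_sq_le_sq_mul_sq S2
      (fun i => Real.sqrt (min m i : ℕ)) (fun i => Real.sqrt (degCount G i))
    have csq : (∑ i ∈ S2, Real.sqrt (min m i : ℕ) * Real.sqrt (degCount G i)) ^ 2 ≤
        (∑ i ∈ S2, ((min m i : ℕ) : ℝ)) * ∑ i ∈ S2, (degCount G i : ℝ) := by
      refine cs.trans (le_of_eq ?_)
      congr 1
      · exact Finset.sum_congr rfl fun i _ => Real.sq_sqrt (by positivity)
      · exact Finset.sum_congr rfl fun i _ => Real.sq_sqrt (by positivity)
    calc (∑ i ∈ S2, Real.sqrt (min m i : ℕ) * Real.sqrt (degCount G i))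
        = Real.sqrt ((∑ i ∈ S2, Real.sqrt (min m i : ℕ) * Real.sqrt (degCount G i)) ^ 2) := by
          rw [Real.sqrt_sq (Finset.sum_nonneg fun i _ => by positivity)]
      _ ≤ Real.sqrt ((∑ i ∈ S2, ((min m i : ℕ) : ℝ)) * ∑ i ∈ S2, (degCount G i : ℝ)) :=
          Real.sqrt_le_sqrt csq
      _ = _ := Real.sqrt_mul (Finset.sum_nonneg fun i _ => by positivity) _
  rw [mul_assoc]
  exact add_le_add hpart1 hpart2
end

section
/- Let Y, Z, S, M be nonnegative real numbers satisfying S ≤ 1, S ≤ M ≤ (1+S)/2, and Y + Z² ≤ M(1−M) + (2M−1)/2. Then Y + √M · Z · √(1−S) ≤ 13/24. -/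
theorem stmt18 (Y Z S M : ℝ) (hY : 0 ≤ Y) (hZ : 0 ≤ Z) (hS : 0 ≤ S) (hM : 0 ≤ M)
    (hS1 : S ≤ 1) (hSM : S ≤ M) (hM2 : M ≤ (1 + S) / 2)
    (hYZ : Y + Z ^ 2 ≤ M * (1 - M) + (2 * M - 1) / 2) :
    Y + Real.sqrt M * Z * Real.sqrt (1 - S) ≤ 13 / 24 := by
  have hMS : 0 ≤ M * (1 - S) := mul_nonneg hM (by linarith)
  have h1 : Real.sqrt M * Z * Real.sqrt (1 - S) = Real.sqrt (M * (1 - S)) * Z := by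
    rw [Real.sqrt_mul hM]; ring
  rw [h1]
  have hs := Real.sq_sqrt hMS
  have hsn := Real.sqrt_nonneg (M * (1 - S))
  have key : Real.sqrt (M * (1 - S)) * Z ≤ M * (1 - S) / 4 + Z ^ 2 := by
    nlinarith [sq_nonneg (Real.sqrt (M * (1 - S)) / 2 - Z)]
  have hms : 2 * M - 1 ≤ S := by linarith
  have hmb : M * (1 - S) ≤ 2 * M * (1 - M) := by nlinarith [mul_nonneg hM (by linarith : (0:ℝ) ≤ S - (2 * M - 1))]
  nlinarith [sq_nonneg (6 * M - 5)]
end
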